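/- Let ε, η ∈ (0, 1) and let E ⊆ ℝ^N be a finite set with |E| = p. Let Φ ∈ ℝ^{m×N} be a fixed matrix having the (k, δ)-restricted isometry property for some k ≥ 40·log(4p/η) and δ ≤ ε/4. Let ξ ∈ {−1, 1}^N be a Rademacher vector and D_ξ the N × N diagonal matrix with diagonal ξ. Then with probability at least 1 − η over ξ, the inequality (1 − ε)‖x‖₂² ≤ ‖Φ D_ξ x‖₂² ≤ (1 + ε)‖x‖₂² holds simultaneously for all x ∈ E. -/

import Mathlib

open MeasureTheory ProbabilityTheory

noncomputable section

/-- A measurable-space structure on matrices, inherited from the product σ-algebra. -/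
instance matrixMeasurableSpace {m n α : Type*} [MeasurableSpace α] :
    MeasurableSpace (Matrix m n α) :=
  (inferInstance : MeasurableSpace (m → n → α))

/-- The squared Euclidean norm ‖x‖₂² of a vector `x ∈ ℝ^d`. -/
def sqNorm {d : ℕ} (x : Fin d → ℝ) : ℝ := ∑ i, x i ^ 2

/-- A random matrix `A ∈ ℝ^{m×N}` is a `(p, ε, η)`-Johnson–Lindenstrauss embedding if for every
set `E ⊆ ℝ^N` of cardinality `p`, with probability at least `1 - η` one has
`(1 - ε)‖x‖₂² ≤ ‖Ax‖₂² ≤ (1 + ε)‖x‖₂²` simultaneously for all `x ∈ E`. -/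
def IsJLE {Ω : Type*} [MeasurableSpace Ω] (μ : Measure Ω) {m N : ℕ}
    (A : Ω → Matrix (Fin m) (Fin N) ℝ) (p : ℕ) (ε η : ℝ) : Prop :=
  ∀ E : Finset (Fin N → ℝ), E.card = p →
    1 - η ≤ (μ {ω | ∀ x ∈ E,
      (1 - ε) * sqNorm x ≤ sqNorm ((A ω).mulVec x) ∧
      sqNorm ((A ω).mulVec x) ≤ (1 + ε) * sqNorm x}).toReal


/-- A matrix `Φ ∈ ℝ^{m×N}` has the `(k, δ)`-restricted isometry property if it preserves
the squared norm of every `k`-sparse vector up to `1 ± δ`. -/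
def HasRIP {m N : ℕ} (Φ : Matrix (Fin m) (Fin N) ℝ) (k : ℕ) (δ : ℝ) : Prop :=
  ∀ x : Fin N → ℝ, (Finset.univ.filter fun i => x i ≠ 0).card ≤ k →
    (1 - δ) * sqNorm x ≤ sqNorm (Φ.mulVec x) ∧ sqNorm (Φ.mulVec x) ≤ (1 + δ) * sqNorm x

/-- `ξ` is a Rademacher vector: its entries are independent, each taking the values `1` and
`-1` with probability `1/2` each. -/
def IsRademacher {Ω : Type*} [MeasurableSpace Ω] (μ : Measure Ω) {N : ℕ}
    (ξ : Ω → Fin N → ℝ) : Prop :=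
  Measurable ξ ∧
  iIndepFun (fun (i : Fin N) (ω : Ω) => ξ ω i) μ ∧
  ∀ i, (μ {ω | ξ ω i = 1}).toReal = 1/2 ∧ (μ {ω | ξ ω i = -1}).toReal = 1/2

section KWProof
open Finset

variable {N m : ℕ}

def sgnb (b : Bool) : ℝ := if b then 1 else -1

lemma sgnb_sq (b : Bool) : sgnb b ^ 2 = 1 := by cases b <;> norm_num [sgnb]
lemma sgnb_not (b : Bool) : sgnb (!b) = - sgnb b := by cases b <;> norm_num [sgnb]


lemma engine_core (ρ : Fin N → ℕ) (γ : Fin N → (Fin N → Bool) → ℝ)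
    (hpred : ∀ j (σ σ' : Fin N → Bool), (∀ i, ρ i < ρ j → σ i = σ' i) → γ j σ = γ j σ')
    (s : Finset (Fin N)) :
    ∑ σ : Fin N → Bool, Real.exp (∑ j ∈ s, (sgnb (σ j) * γ j σ - (γ j σ)^2/2)) ≤ 2 ^ N := by
  induction s using Finset.strongInduction with
  | _ s ih =>
  rcases s.eq_empty_or_nonempty with rfl | hne
  · simp [Fintype.card_fun]
  · obtain ⟨j, hjs, hjmax⟩ := s.exists_max_image ρ hne
    set s' := s.erase j with hs'
    have hss : s' ⊂ s := Finset.erase_ssubset hjs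
    have ihs := ih s' hss
    -- flip involution
    have hinv : Function.Involutive (fun σ : Fin N → Bool => Function.update σ j (!(σ j))) := by
      intro σ
      funext i
      rcases eq_or_ne i j with rfl | hij
      · simp
      · simp [Function.update_of_ne hij]
    set e := hinv.toPerm with he
    have key : ∀ σ : Fin N → Bool,
        Real.exp (∑ j' ∈ s, (sgnb (σ j') * γ j' σ - (γ j' σ)^2/2))
        + Real.exp (∑ j' ∈ s, (sgnb (e σ j') * γ j' (e σ) - (γ j' (e σ))^2/2))
        ≤ 2 * Real.exp (∑ j' ∈ s', (sgnb (σ j') * γ j' σ - (γ j' σ)^2/2)) := by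
      intro σ
      have hesig : ∀ i, i ≠ j → e σ i = σ i := by
        intro i hij
        show Function.update σ j (!(σ j)) i = σ i
        exact Function.update_of_ne hij _ _
      have hγe : ∀ j' ∈ s, γ j' (e σ) = γ j' σ := by
        intro j' hj'
        refine hpred j' _ _ fun i hi => ?_
        have : i ≠ j := by
          intro h; subst h
          exact absurd hi (not_lt.mpr (hjmax j' hj'))
        exact hesig i this
      have hsplit : ∀ τ : Fin N → Bool, (∀ j' ∈ s, γ j' τ = γ j' σ) →
          ∑ j' ∈ s, (sgnb (τ j') * γ j' τ - (γ j' τ)^2/2)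
          = sgnb (τ j) * γ j σ - (γ j σ)^2/2
            + ∑ j' ∈ s', (sgnb (τ j') * γ j' τ - (γ j' τ)^2/2) := by
        intro τ hτ
        rw [← Finset.add_sum_erase _ _ hjs, hτ j hjs]
      have h1 := hsplit σ (fun _ _ => rfl)
      have h2 := hsplit (e σ) hγe
      have hrest : ∑ j' ∈ s', (sgnb (e σ j') * γ j' (e σ) - (γ j' (e σ))^2/2)
          = ∑ j' ∈ s', (sgnb (σ j') * γ j' σ - (γ j' σ)^2/2) := by
        refine Finset.sum_congr rfl fun j' hj' => ?_
        have hj'j : j' ≠ j := Finset.ne_of_mem_erase hj'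
        rw [hesig j' hj'j, hγe j' (Finset.mem_of_mem_erase hj')]
      have hej : e σ j = !(σ j) := by
        show Function.update σ j (!(σ j)) j = _
        simp
      rw [h1, h2, hrest, hej, sgnb_not, Real.exp_add, Real.exp_add]
      set A := Real.exp (∑ j' ∈ s', (sgnb (σ j') * γ j' σ - (γ j' σ)^2/2)) with hA
      have hApos : 0 < A := Real.exp_pos _
      set c := γ j σ with hc
      set a := sgnb (σ j) with ha
      have key2 : Real.exp (a * c - c^2/2) + Real.exp (-a * c - c^2/2) ≤ 2 := by
        have h3 : Real.exp (a * c - c^2/2) + Real.exp (-a * c - c^2/2)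
            = 2 * Real.cosh (a*c) * Real.exp (-(c^2/2)) := by
          rw [Real.cosh_eq, sub_eq_add_neg, Real.exp_add, sub_eq_add_neg, Real.exp_add, neg_mul]
          ring
        rw [h3]
        have hcosh := Real.cosh_le_exp_half_sq (a * c)
        have hac : (a*c)^2 = c^2 := by
          have := sgnb_sq (σ j)
          rw [mul_pow]
          rw [← ha] at this
          rw [this, one_mul]
        rw [hac] at hcosh
        calc 2 * Real.cosh (a*c) * Real.exp (-(c^2/2))
            ≤ 2 * Real.exp (c^2/2) * Real.exp (-(c^2/2)) := by
              have h4 : (0:ℝ) < Real.exp (-(c^2/2)) := Real.exp_pos _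
              nlinarith [Real.cosh_pos (a*c)]
          _ = 2 := by rw [mul_assoc, ← Real.exp_add]; simp
      calc Real.exp (a * c - c^2/2) * A + Real.exp (-a * c - c^2/2) * A
          = (Real.exp (a * c - c^2/2) + Real.exp (-a * c - c^2/2)) * A := by ring
        _ ≤ 2 * A := by nlinarith
    -- sum over σ
    have hsum : ∑ σ : Fin N → Bool, Real.exp (∑ j' ∈ s, (sgnb (e σ j') * γ j' (e σ) - (γ j' (e σ))^2/2))
        = ∑ σ : Fin N → Bool, Real.exp (∑ j' ∈ s, (sgnb (σ j') * γ j' σ - (γ j' σ)^2/2)) := by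
      exact Equiv.sum_comp e (fun σ => Real.exp (∑ j' ∈ s, (sgnb (σ j') * γ j' σ - (γ j' σ)^2/2)))
    have h5 : 2 * ∑ σ : Fin N → Bool, Real.exp (∑ j' ∈ s, (sgnb (σ j') * γ j' σ - (γ j' σ)^2/2))
        ≤ 2 * ∑ σ : Fin N → Bool, Real.exp (∑ j' ∈ s', (sgnb (σ j') * γ j' σ - (γ j' σ)^2/2)) := by
      rw [two_mul]
      nth_rewrite 2 [← hsum]
      rw [← Finset.sum_add_distrib, Finset.mul_sum]
      exact Finset.sum_le_sum fun σ _ => key σ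
    have := ihs
    linarith

lemma engine_tail (ρ : Fin N → ℕ) (γ : Fin N → (Fin N → Bool) → ℝ)
    (hpred : ∀ j (σ σ' : Fin N → Bool), (∀ i, ρ i < ρ j → σ i = σ' i) → γ j σ = γ j σ')
    (Vb u lam : ℝ) (hlam : 0 ≤ lam)
    (hV : ∀ σ : Fin N → Bool, ∑ j, (γ j σ)^2 ≤ Vb) :
    ((Finset.univ.filter fun σ : Fin N → Bool => u ≤ ∑ j, sgnb (σ j) * γ j σ).card : ℝ)
      ≤ 2^N * Real.exp (lam^2 * Vb / 2 - lam * u) := by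
  classical
  have hcore := engine_core ρ (fun j σ => lam * γ j σ)
    (fun j σ σ' h => congrArg (fun t => lam * t) (hpred j σ σ' h)) Finset.univ
  have hpt : ∀ σ ∈ (Finset.univ.filter fun σ : Fin N → Bool => u ≤ ∑ j, sgnb (σ j) * γ j σ),
      Real.exp (lam * u - lam^2 * Vb / 2)
        ≤ Real.exp (∑ j, (sgnb (σ j) * (lam * γ j σ) - (lam * γ j σ)^2/2)) := by
    intro σ hσ
    rw [Finset.mem_filter] at hσ
    apply Real.exp_le_exp.mpr
    have e1 : ∑ j, sgnb (σ j) * (lam * γ j σ) = lam * ∑ j, sgnb (σ j) * γ j σ := by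
      rw [Finset.mul_sum]; exact Finset.sum_congr rfl fun j _ => by ring
    have e2 : ∑ j, (lam * γ j σ)^2/2 = lam^2 * (∑ j, (γ j σ)^2) / 2 := by
      rw [Finset.mul_sum, Finset.sum_div]; exact Finset.sum_congr rfl fun j _ => by ring
    rw [Finset.sum_sub_distrib, e1, e2]
    have h2 := hV σ
    have h3 := hσ.2
    nlinarith [sq_nonneg lam]
  have hsum : ((Finset.univ.filter fun σ : Fin N → Bool => u ≤ ∑ j, sgnb (σ j) * γ j σ).card : ℝ)
      * Real.exp (lam * u - lam^2 * Vb / 2)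
      ≤ ∑ σ : Fin N → Bool, Real.exp (∑ j, (sgnb (σ j) * (lam * γ j σ) - (lam * γ j σ)^2/2)) := by
    calc ((Finset.univ.filter fun σ : Fin N → Bool => u ≤ ∑ j, sgnb (σ j) * γ j σ).card : ℝ)
        * Real.exp (lam * u - lam^2 * Vb / 2)
        = ∑ _σ ∈ (Finset.univ.filter fun σ : Fin N → Bool => u ≤ ∑ j, sgnb (σ j) * γ j σ),
          Real.exp (lam * u - lam^2 * Vb / 2) := by
            rw [Finset.sum_const, nsmul_eq_mul]
      _ ≤ ∑ σ ∈ (Finset.univ.filter fun σ : Fin N → Bool => u ≤ ∑ j, sgnb (σ j) * γ j σ),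
          Real.exp (∑ j, (sgnb (σ j) * (lam * γ j σ) - (lam * γ j σ)^2/2)) :=
            Finset.sum_le_sum hpt
      _ ≤ _ := by
            apply Finset.sum_le_sum_of_subset_of_nonneg (Finset.filter_subset _ _)
            intro i _ _
            positivity
  have hfin := le_trans hsum hcore
  have hexp : (0:ℝ) < Real.exp (lam * u - lam^2 * Vb / 2) := Real.exp_pos _
  have h6 := (le_div_iff₀ hexp).mpr hfin
  calc ((Finset.univ.filter fun σ : Fin N → Bool => u ≤ ∑ j, sgnb (σ j) * γ j σ).card : ℝ)
      ≤ 2^N / Real.exp (lam * u - lam^2 * Vb / 2) := h6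
    _ = 2^N * Real.exp (lam^2 * Vb / 2 - lam * u) := by
        rw [div_eq_mul_inv, ← Real.exp_neg]
        congr 2
        ring

def dotv {d : ℕ} (u v : Fin d → ℝ) : ℝ := ∑ i, u i * v i

lemma sqNorm_nonneg {d : ℕ} (x : Fin d → ℝ) : 0 ≤ sqNorm x :=
  Finset.sum_nonneg fun i _ => sq_nonneg _

lemma sqNorm_eq_zero {d : ℕ} {x : Fin d → ℝ} (h : sqNorm x = 0) : x = 0 := by
  funext i
  have := (Finset.sum_eq_zero_iff_of_nonneg (fun i _ => sq_nonneg (x i))).mp h i (mem_univ i)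
  exact pow_eq_zero_iff (by norm_num) |>.mp this

lemma sqNorm_add {d : ℕ} (u v : Fin d → ℝ) :
    sqNorm (u + v) = sqNorm u + 2 * dotv u v + sqNorm v := by
  simp only [sqNorm, dotv, Pi.add_apply, Finset.mul_sum]
  rw [← Finset.sum_add_distrib, ← Finset.sum_add_distrib]
  exact Finset.sum_congr rfl fun i _ => by ring

lemma sqNorm_sub {d : ℕ} (u v : Fin d → ℝ) :
    sqNorm (u - v) = sqNorm u - 2 * dotv u v + sqNorm v := by
  simp only [sqNorm, dotv, Pi.sub_apply, Finset.mul_sum]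
  rw [← Finset.sum_sub_distrib, ← Finset.sum_add_distrib]
  exact Finset.sum_congr rfl fun i _ => by ring

lemma dotv_mulVec_swap {m N : ℕ} (Φ : Matrix (Fin m) (Fin N) ℝ) (u : Fin N → ℝ) (v : Fin m → ℝ) :
    dotv (Φ.mulVec u) v = ∑ j, u j * dotv (fun i => Φ i j) v := by
  simp only [dotv, Matrix.mulVec, dotProduct, Finset.sum_mul, Finset.mul_sum]
  rw [Finset.sum_comm]
  exact Finset.sum_congr rfl fun j _ => Finset.sum_congr rfl fun i _ => by ring

lemma disj_sqNorm_add {N : ℕ} (u v : Fin N → ℝ) (hdisj : ∀ j, u j = 0 ∨ v j = 0) :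
    sqNorm (u + v) = sqNorm u + sqNorm v ∧ sqNorm (u - v) = sqNorm u + sqNorm v := by
  have hd : dotv u v = 0 := by
    apply Finset.sum_eq_zero
    intro j _
    rcases hdisj j with h | h <;> simp [h]
  rw [sqNorm_add, sqNorm_sub, hd]
  constructor <;> ring

lemma supp_card_le {N : ℕ} (w : Fin N → ℝ) (A : Finset (Fin N)) (h : ∀ j, w j ≠ 0 → j ∈ A) :
    (Finset.univ.filter fun j => w j ≠ 0).card ≤ A.card := by
  apply Finset.card_le_card
  intro j hj
  rw [Finset.mem_filter] at hj
  exact h j hj.2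

-- basic polarization bound
lemma rop_basic {m N k : ℕ} {Φ : Matrix (Fin m) (Fin N) ℝ} {δ : ℝ} (hRIP : HasRIP Φ k δ)
    (u v : Fin N → ℝ) (hdisj : ∀ j, u j = 0 ∨ v j = 0)
    (hcard : (Finset.univ.filter fun j => u j ≠ 0).card
      + (Finset.univ.filter fun j => v j ≠ 0).card ≤ k) :
    |dotv (Φ.mulVec u) (Φ.mulVec v)| ≤ δ * (sqNorm u + sqNorm v) / 2 := by
  have hsupp : ∀ (w w' : Fin N → ℝ), (∀ j, w j ≠ 0 → u j ≠ 0 ∨ v j ≠ 0) →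
      True := fun _ _ _ => trivial
  have hcard' : ∀ (w : Fin N → ℝ), (∀ j, w j ≠ 0 → (u j ≠ 0 ∨ v j ≠ 0)) →
      (Finset.univ.filter fun j => w j ≠ 0).card ≤ k := by
    intro w hw
    calc (Finset.univ.filter fun j => w j ≠ 0).card
        ≤ ((Finset.univ.filter fun j => u j ≠ 0) ∪ (Finset.univ.filter fun j => v j ≠ 0)).card := by
          apply Finset.card_le_card
          intro j hj
          rw [Finset.mem_filter] at hj
          rw [Finset.mem_union, Finset.mem_filter, Finset.mem_filter]
          rcases hw j hj.2 with h | h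
          · exact Or.inl ⟨mem_univ j, h⟩
          · exact Or.inr ⟨mem_univ j, h⟩
      _ ≤ _ := le_trans (Finset.card_union_le _ _) hcard
  have h1 := hRIP (u + v) (hcard' _ (fun j hj => by
    by_contra hc
    push_neg at hc
    simp [Pi.add_apply, hc.1, hc.2] at hj))
  have h2 := hRIP (u - v) (hcard' _ (fun j hj => by
    by_contra hc
    push_neg at hc
    simp [Pi.sub_apply, hc.1, hc.2] at hj))
  obtain ⟨hn1, hn2⟩ := disj_sqNorm_add u v hdisj
  have e1 : sqNorm (Φ.mulVec (u + v)) = sqNorm (Φ.mulVec u) + 2 * dotv (Φ.mulVec u) (Φ.mulVec v)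
      + sqNorm (Φ.mulVec v) := by rw [Matrix.mulVec_add]; exact sqNorm_add _ _
  have e2 : sqNorm (Φ.mulVec (u - v)) = sqNorm (Φ.mulVec u) - 2 * dotv (Φ.mulVec u) (Φ.mulVec v)
      + sqNorm (Φ.mulVec v) := by rw [Matrix.mulVec_sub]; exact sqNorm_sub _ _
  rw [hn1, e1] at h1
  rw [hn2, e2] at h2
  rw [abs_le]
  constructor <;> nlinarith [h1.1, h1.2, h2.1, h2.2]

lemma sqNorm_smul {d : ℕ} (c : ℝ) (x : Fin d → ℝ) : sqNorm (c • x) = c^2 * sqNorm x := by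
  simp only [sqNorm, Pi.smul_apply, smul_eq_mul, Finset.mul_sum]
  exact Finset.sum_congr rfl fun i _ => by ring

lemma dotv_smul_smul {d : ℕ} (c e : ℝ) (x y : Fin d → ℝ) :
    dotv (c • x) (e • y) = c * e * dotv x y := by
  simp only [dotv, Pi.smul_apply, smul_eq_mul, Finset.mul_sum]
  exact Finset.sum_congr rfl fun i _ => by ring

lemma rop_scalar {m N k : ℕ} {Φ : Matrix (Fin m) (Fin N) ℝ} {δ : ℝ} (hRIP : HasRIP Φ k δ)
    (u v : Fin N → ℝ) (hdisj : ∀ j, u j = 0 ∨ v j = 0)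
    (hcard : (Finset.univ.filter fun j => u j ≠ 0).card
      + (Finset.univ.filter fun j => v j ≠ 0).card ≤ k) :
    |dotv (Φ.mulVec u) (Φ.mulVec v)|
      ≤ δ * (Real.sqrt (sqNorm u) * Real.sqrt (sqNorm v)) := by
  rcases eq_or_ne (sqNorm u) 0 with hu | hu
  · have h0 : u = 0 := sqNorm_eq_zero hu
    subst h0
    rw [Matrix.mulVec_zero]
    have : dotv (0 : Fin m → ℝ) (Φ.mulVec v) = 0 := by
      simp [dotv]
    rw [this, hu]
    simp
  rcases eq_or_ne (sqNorm v) 0 with hv | hv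
  · have h0 : v = 0 := sqNorm_eq_zero hv
    subst h0
    rw [Matrix.mulVec_zero]
    have : dotv (Φ.mulVec u) (0 : Fin m → ℝ) = 0 := by
      simp [dotv]
    rw [this, hv]
    simp
  set a := sqNorm u with hadef
  set b := sqNorm v with hbdef
  have ha : 0 < a := lt_of_le_of_ne (sqNorm_nonneg u) (Ne.symm hu)
  have hb : 0 < b := lt_of_le_of_ne (sqNorm_nonneg v) (Ne.symm hv)
  have hsa : 0 < Real.sqrt a := Real.sqrt_pos.mpr ha
  have hsb : 0 < Real.sqrt b := Real.sqrt_pos.mpr hb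
  set t := Real.sqrt (Real.sqrt b / Real.sqrt a) with htdef
  have ht : 0 < t := Real.sqrt_pos.mpr (by positivity)
  have ht2 : t^2 = Real.sqrt b / Real.sqrt a := Real.sq_sqrt (by positivity)
  have hdisj' : ∀ j, (t • u) j = 0 ∨ (t⁻¹ • v) j = 0 := by
    intro j
    rcases hdisj j with h | h
    · left; simp [h]
    · right; simp [h]
  have hfeq1 : (Finset.univ.filter fun j => (t • u) j ≠ 0)
      = (Finset.univ.filter fun j => u j ≠ 0) := by
    apply Finset.filter_congr
    intro j _
    simp [Pi.smul_apply, smul_eq_mul, mul_ne_zero_iff, ht.ne']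
  have hfeq2 : (Finset.univ.filter fun j => (t⁻¹ • v) j ≠ 0)
      = (Finset.univ.filter fun j => v j ≠ 0) := by
    apply Finset.filter_congr
    intro j _
    simp [Pi.smul_apply, smul_eq_mul, mul_ne_zero_iff, (inv_pos.mpr ht).ne']
  have hbasic := rop_basic hRIP (t • u) (t⁻¹ • v) hdisj' (by rw [hfeq1, hfeq2]; exact hcard)
  have e3 : Φ.mulVec (t • u) = t • Φ.mulVec u := by
    rw [Matrix.mulVec_smul]
  have e4 : Φ.mulVec (t⁻¹ • v) = t⁻¹ • Φ.mulVec v := by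
    rw [Matrix.mulVec_smul]
  rw [e3, e4, dotv_smul_smul, mul_inv_cancel₀ ht.ne', one_mul] at hbasic
  rw [sqNorm_smul, sqNorm_smul, ← hadef, ← hbdef] at hbasic
  have key : t^2 * a + (t⁻¹)^2 * b = 2 * (Real.sqrt a * Real.sqrt b) := by
    rw [inv_pow, ht2]
    have h1 : Real.sqrt a * Real.sqrt a = a := Real.mul_self_sqrt ha.le
    have h2 : Real.sqrt b * Real.sqrt b = b := Real.mul_self_sqrt hb.le
    field_simp
    nlinarith
  calc |dotv (Φ.mulVec u) (Φ.mulVec v)| ≤ δ * (t^2 * a + (t⁻¹)^2 * b) / 2 := hbasic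
    _ = δ * (Real.sqrt a * Real.sqrt b) := by rw [key]; ring

lemma rop_op {m N k : ℕ} {Φ : Matrix (Fin m) (Fin N) ℝ} {δ : ℝ} (hRIP : HasRIP Φ k δ)
    (u : Fin N → ℝ) (A B : Finset (Fin N)) (hA : ∀ j, u j ≠ 0 → j ∈ A)
    (hAB : ∀ j, j ∈ A → j ∉ B) (hcard : A.card + B.card ≤ k) :
    ∑ j ∈ B, (dotv (fun i => Φ i j) (Φ.mulVec u))^2 ≤ δ^2 * sqNorm u := by
  classical
  set q : Fin N → ℝ := fun j => if j ∈ B then dotv (fun i => Φ i j) (Φ.mulVec u) else 0 with hq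
  have hQ : sqNorm q = ∑ j ∈ B, (dotv (fun i => Φ i j) (Φ.mulVec u))^2 := by
    rw [sqNorm, ← Finset.sum_filter_add_sum_filter_not Finset.univ (fun j => j ∈ B)]
    have hz : ∑ j ∈ Finset.univ.filter (fun j => ¬ j ∈ B), q j ^ 2 = 0 := by
      apply Finset.sum_eq_zero
      intro j hj
      rw [Finset.mem_filter] at hj
      simp [hq, hj.2]
    rw [hz, add_zero]
    rw [Finset.filter_mem_eq_inter, Finset.univ_inter]
    exact Finset.sum_congr rfl fun j hj => by simp [hq, hj]
  have hdot : dotv (Φ.mulVec q) (Φ.mulVec u) = sqNorm q := by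
    rw [dotv_mulVec_swap, hQ]
    rw [← Finset.sum_filter_add_sum_filter_not Finset.univ (fun j => j ∈ B)]
    have hz : ∑ j ∈ Finset.univ.filter (fun j => ¬ j ∈ B), q j * dotv (fun i => Φ i j) (Φ.mulVec u) = 0 := by
      apply Finset.sum_eq_zero
      intro j hj
      rw [Finset.mem_filter] at hj
      simp [hq, hj.2]
    rw [hz, add_zero, Finset.filter_mem_eq_inter, Finset.univ_inter]
    exact Finset.sum_congr rfl fun j hj => by simp [hq, hj]; ring
  have hdisj : ∀ j, q j = 0 ∨ u j = 0 := by
    intro j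
    by_cases hjB : j ∈ B
    · by_cases hju : u j = 0
      · right; exact hju
      · exfalso; exact hAB j (hA j hju) hjB
    · left; simp [hq, hjB]
  have hcard' : (Finset.univ.filter fun j => q j ≠ 0).card
      + (Finset.univ.filter fun j => u j ≠ 0).card ≤ k := by
    have h1 : (Finset.univ.filter fun j => q j ≠ 0).card ≤ B.card := by
      apply supp_card_le
      intro j hj
      by_contra hjB
      simp [hq, hjB] at hj
    have h2 : (Finset.univ.filter fun j => u j ≠ 0).card ≤ A.card :=
      supp_card_le u A hA
    omega
  have hdisj2 : ∀ j, u j = 0 ∨ q j = 0 := fun j => (hdisj j).symm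
  have hrop := rop_scalar hRIP q u hdisj hcard'
  rw [hdot] at hrop
  have hQnn : 0 ≤ sqNorm q := sqNorm_nonneg q
  rw [abs_of_nonneg hQnn] at hrop
  rcases eq_or_ne (sqNorm q) 0 with h0 | h0
  · rw [← hQ, h0]
    exact mul_nonneg (sq_nonneg δ) (sqNorm_nonneg u)
  · have hQpos : 0 < sqNorm q := lt_of_le_of_ne hQnn (Ne.symm h0)
    have hsq : Real.sqrt (sqNorm q) > 0 := Real.sqrt_pos.mpr hQpos
    have h5 : Real.sqrt (sqNorm q) * Real.sqrt (sqNorm q) = sqNorm q :=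
      Real.mul_self_sqrt hQnn
    have h6 : Real.sqrt (sqNorm q) ≤ δ * Real.sqrt (sqNorm u) := by
      nlinarith
    have h7 : sqNorm q ≤ (δ * Real.sqrt (sqNorm u))^2 := by
      nlinarith
    rw [← hQ]
    calc sqNorm q ≤ (δ * Real.sqrt (sqNorm u))^2 := h7
      _ = δ^2 * sqNorm u := by
          rw [mul_pow, Real.sq_sqrt (sqNorm_nonneg u)]

lemma weighted_cs {m' : ℕ} {ι : Type*} (T : Finset ι) (a : ι → ℝ) (ha : ∀ t ∈ T, 0 ≤ a t)
    (u : ι → Fin m' → ℝ) :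
    sqNorm (fun i => ∑ t ∈ T, a t * u t i)
      ≤ (∑ t ∈ T, a t) * ∑ t ∈ T, a t * sqNorm (u t) := by
  have hpt : ∀ i, (∑ t ∈ T, a t * u t i)^2 ≤ (∑ t ∈ T, a t) * ∑ t ∈ T, a t * (u t i)^2 := by
    intro i
    have := Finset.sum_mul_sq_le_sq_mul_sq T (fun t => Real.sqrt (a t))
      (fun t => Real.sqrt (a t) * u t i)
    have e1 : ∑ t ∈ T, Real.sqrt (a t) * (Real.sqrt (a t) * u t i) = ∑ t ∈ T, a t * u t i := by
      refine Finset.sum_congr rfl fun t ht => ?_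
      rw [← mul_assoc, Real.mul_self_sqrt (ha t ht)]
    have e2 : ∑ t ∈ T, Real.sqrt (a t) ^ 2 = ∑ t ∈ T, a t := by
      refine Finset.sum_congr rfl fun t ht => Real.sq_sqrt (ha t ht)
    have e3 : ∑ t ∈ T, (Real.sqrt (a t) * u t i)^2 = ∑ t ∈ T, a t * (u t i)^2 := by
      refine Finset.sum_congr rfl fun t ht => ?_
      rw [mul_pow, Real.sq_sqrt (ha t ht)]
    rw [e1, e2, e3] at this
    exact this
  calc sqNorm (fun i => ∑ t ∈ T, a t * u t i) = ∑ i, (∑ t ∈ T, a t * u t i)^2 := rfl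
    _ ≤ ∑ i : Fin m', ((∑ t ∈ T, a t) * ∑ t ∈ T, a t * (u t i)^2) :=
        Finset.sum_le_sum fun i _ => hpt i
    _ = (∑ t ∈ T, a t) * ∑ t ∈ T, a t * sqNorm (u t) := by
        rw [← Finset.mul_sum]
        congr 1
        rw [Finset.sum_comm]
        exact Finset.sum_congr rfl fun t _ => by rw [← Finset.mul_sum]; rfl

def srt (x : Fin N → ℝ) : Equiv.Perm (Fin N) := Tuple.sort (fun i => -(x i)^2)

lemma srt_anti (x : Fin N → ℝ) {i i' : Fin N} (hii' : i ≤ i') :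
    x (srt x i') ^ 2 ≤ x (srt x i) ^ 2 := by
  have := Tuple.monotone_sort (fun i => -(x i)^2) hii'
  simp only [Function.comp_apply] at this
  simp only [srt]
  linarith

def blk (x : Fin N → ℝ) (h : ℕ) (j : Fin N) : ℕ := ((srt x).symm j : ℕ) / h

def Bt (x : Fin N → ℝ) (h t : ℕ) : Finset (Fin N) :=
  Finset.univ.filter (fun j => blk x h j = t)

def Sb (x : Fin N → ℝ) (h t : ℕ) : ℝ := ∑ j ∈ Bt x h t, x j ^ 2

def Wb (x : Fin N → ℝ) (h t : ℕ) : ℝ := if t = 0 then 0 else Sb x h (t - 1)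

lemma blk_lt (x : Fin N → ℝ) {h : ℕ} (hh : 1 ≤ h) (j : Fin N) : blk x h j < N :=
  lt_of_le_of_lt (Nat.div_le_self _ _) ((srt x).symm j).isLt

lemma Sb_nonneg (x : Fin N → ℝ) (h t : ℕ) : 0 ≤ Sb x h t :=
  Finset.sum_nonneg fun j _ => sq_nonneg _

lemma Wb_nonneg (x : Fin N → ℝ) (h t : ℕ) : 0 ≤ Wb x h t := by
  unfold Wb
  split
  · exact le_refl 0
  · exact Sb_nonneg x h _

lemma mem_Bt_iff {x : Fin N → ℝ} {h t : ℕ} {j : Fin N} :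
    j ∈ Bt x h t ↔ blk x h j = t := by
  rw [Bt, Finset.mem_filter]
  exact ⟨fun h => h.2, fun h => ⟨Finset.mem_univ _, h⟩⟩

lemma blk_bounds {x : Fin N → ℝ} {h t : ℕ} (hh : 1 ≤ h) {j : Fin N}
    (hj : blk x h j = t) : t * h ≤ ((srt x).symm j : ℕ) ∧ ((srt x).symm j : ℕ) < t * h + h := by
  unfold blk at hj
  subst hj
  set i := ((srt x).symm j : ℕ) with hi
  constructor
  · rw [mul_comm]
    exact Nat.le.intro (Nat.div_add_mod i h)
  · rw [mul_comm]
    calc i = h * (i / h) + i % h := (Nat.div_add_mod i h).symm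
      _ < h * (i / h) + h := Nat.add_lt_add_left (Nat.mod_lt i (by omega)) _

lemma card_Bt (x : Fin N → ℝ) {h : ℕ} (hh : 1 ≤ h) (t : ℕ) : (Bt x h t).card ≤ h := by
  classical
  have hinj : ∀ j ∈ Bt x h t, ((srt x).symm j : ℕ) ∈ Finset.Ico (t*h) (t*h+h) := by
    intro j hj
    rw [Finset.mem_Ico]
    exact blk_bounds hh (mem_Bt_iff.mp hj)
  calc (Bt x h t).card ≤ (Finset.Ico (t*h) (t*h+h)).card := by
        apply Finset.card_le_card_of_injOn (fun j => ((srt x).symm j : ℕ)) hinj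
        intro a _ b _ hab
        exact (srt x).symm.injective (Fin.val_injective hab)
    _ = h := by rw [Nat.card_Ico]; omega

lemma sum_Sb (x : Fin N → ℝ) {h : ℕ} (hh : 1 ≤ h) :
    ∑ t ∈ Finset.range N, Sb x h t = sqNorm x := by
  rw [sqNorm]
  exact Finset.sum_fiberwise_of_maps_to (fun j _ => Finset.mem_range.mpr (blk_lt x hh j)) _

lemma sum_Wb_le (x : Fin N → ℝ) {h : ℕ} (hh : 1 ≤ h) :
    ∑ t ∈ Finset.range N, Wb x h t ≤ sqNorm x := by
  cases N with
  | zero =>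
    simp [sqNorm]
  | succ n =>
    rw [Finset.sum_range_succ']
    have e1 : (∑ i ∈ Finset.range n, Wb x h (i+1)) = ∑ i ∈ Finset.range n, Sb x h i :=
      Finset.sum_congr rfl fun i _ => by simp [Wb]
    have e0 : Wb x h 0 = 0 := by simp [Wb]
    rw [e1, e0, add_zero, ← sum_Sb x hh, Finset.sum_range_succ]
    have := Sb_nonneg x h n
    linarith

lemma key_max (x : Fin N → ℝ) {h t : ℕ} (hh : 1 ≤ h) (ht : 1 ≤ t) {j : Fin N}
    (hj : j ∈ Bt x h t) : x j ^ 2 * h ≤ Sb x h (t - 1) := by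
  classical
  have hdiv := mem_Bt_iff.mp hj
  obtain ⟨hlo, hhi⟩ := blk_bounds hh hdiv
  set i0 := (srt x).symm j with hi0
  have hi0lt : (i0 : ℕ) < N := i0.isLt
  have hN1 : 0 < N := lt_of_le_of_lt (Nat.zero_le _) hi0lt
  have hth : (t-1) * h + h = t * h := by
    have h2 : (t-1) + 1 = t := by omega
    calc (t-1) * h + h = ((t-1) + 1) * h := by rw [Nat.succ_mul]
      _ = t * h := by rw [h2]
  -- every element of the previous block has larger square
  have hterm : ∀ j' ∈ Bt x h (t-1), x j ^ 2 ≤ x j' ^ 2 := by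
    intro j' hj'
    obtain ⟨_, hhi'⟩ := blk_bounds hh (mem_Bt_iff.mp hj')
    have hle : (srt x).symm j' ≤ i0 := by
      rw [Fin.le_def]
      omega
    have := srt_anti x hle
    rw [Equiv.apply_symm_apply, Equiv.apply_symm_apply] at this
    exact this
  -- previous block has at least h elements
  have hcard : h ≤ (Bt x h (t-1)).card := by
    have hmap : ∀ n ∈ Finset.Ico ((t-1)*h) (t*h),
        srt x (⟨min n (N-1), by omega⟩ : Fin N) ∈ Bt x h (t-1) := by
      intro n hn
      rw [Finset.mem_Ico] at hn
      have hnN : n < N := by omega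
      have hmin : min n (N-1) = n := by omega
      rw [mem_Bt_iff]
      unfold blk
      rw [Equiv.symm_apply_apply]
      show (min n (N-1)) / h = t - 1
      rw [hmin]
      refine Nat.div_eq_of_lt_le hn.1 ?_
      have h2 : (t-1+1) * h = t * h := by
        have h3 : t - 1 + 1 = t := by omega
        rw [h3]
      rw [h2]
      exact hn.2
    have hinj : ∀ a ∈ Finset.Ico ((t-1)*h) (t*h), ∀ b ∈ Finset.Ico ((t-1)*h) (t*h),
        srt x (⟨min a (N-1), by omega⟩ : Fin N) = srt x (⟨min b (N-1), by omega⟩ : Fin N)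
        → a = b := by
      intro a ha b hb hab
      rw [Finset.mem_Ico] at ha hb
      have h3 := (srt x).injective hab
      have h4 : min a (N-1) = min b (N-1) := congrArg Fin.val h3
      omega
    calc h = (Finset.Ico ((t-1)*h) (t*h)).card := by rw [Nat.card_Ico]; omega
      _ ≤ (Bt x h (t-1)).card := Finset.card_le_card_of_injOn _ hmap hinj
  have hsum := Finset.card_nsmul_le_sum (Bt x h (t-1)) (fun j' => x j' ^ 2) (x j ^ 2) hterm
  rw [nsmul_eq_mul] at hsum
  calc x j ^ 2 * h = (h:ℝ) * x j ^ 2 := by ring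
    _ ≤ ((Bt x h (t-1)).card : ℝ) * x j ^ 2 := by
        apply mul_le_mul_of_nonneg_right _ (sq_nonneg _)
        exact_mod_cast hcard
    _ ≤ Sb x h (t-1) := hsum




def colv (Φ : Matrix (Fin m) (Fin N) ℝ) (j : Fin N) : Fin m → ℝ := fun i => Φ i j

def Zp (x : Fin N → ℝ) (h r : ℕ) (σ : Fin N → Bool) : Fin N → ℝ :=
  fun j => if blk x h j < r then sgnb (σ j) * x j else 0

def zb (x : Fin N → ℝ) (h t : ℕ) (σ : Fin N → Bool) : Fin N → ℝ :=
  fun j => if blk x h j = t then sgnb (σ j) * x j else 0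

def Vv (Φ : Matrix (Fin m) (Fin N) ℝ) (x : Fin N → ℝ) (h r : ℕ) (σ : Fin N → Bool) :
    Fin m → ℝ := Φ.mulVec (Zp x h r σ)

def Yv (Φ : Matrix (Fin m) (Fin N) ℝ) (x : Fin N → ℝ) (h t : ℕ) (σ : Fin N → Bool) :
    Fin m → ℝ := Φ.mulVec (zb x h t σ)

def wv (Φ : Matrix (Fin m) (Fin N) ℝ) (x : Fin N → ℝ) (h t r : ℕ) (σ : Fin N → Bool) :
    Fin N → ℝ :=
  fun j => if blk x h j = t then dotv (colv Φ j) (Vv Φ x h (min r t) σ) else 0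

def Vp (Φ : Matrix (Fin m) (Fin N) ℝ) (x : Fin N → ℝ) (h r : ℕ) (σ : Fin N → Bool) : ℝ :=
  ∑ t ∈ Finset.range N, Wb x h t * sqNorm (wv Φ x h t r σ)

def Zv (Φ : Matrix (Fin m) (Fin N) ℝ) (x : Fin N → ℝ) (h r : ℕ) (σ : Fin N → Bool) :
    Fin m → ℝ :=
  fun i => ∑ t ∈ Finset.range N, (if r < t then Wb x h t else 0) * Φ.mulVec (wv Φ x h t r σ) i

def Gd (Φ : Matrix (Fin m) (Fin N) ℝ) (x : Fin N → ℝ) (h : ℕ) (δ : ℝ) (r : ℕ)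
    (σ : Fin N → Bool) : Prop := ∀ r' ≤ r, Vp Φ x h r' σ ≤ 3 * δ^2

open Classical in
def ind (Φ : Matrix (Fin m) (Fin N) ℝ) (x : Fin N → ℝ) (h : ℕ) (δ : ℝ) (t : ℕ)
    (σ : Fin N → Bool) : ℝ := if Gd Φ x h δ t σ then 1 else 0

def Dv (Φ : Matrix (Fin m) (Fin N) ℝ) (x : Fin N → ℝ) (h t : ℕ) (σ : Fin N → Bool) : ℝ :=
  2 * dotv (Vv Φ x h t σ) (Yv Φ x h t σ)

def mv (Φ : Matrix (Fin m) (Fin N) ℝ) (x : Fin N → ℝ) (h r : ℕ) (σ : Fin N → Bool) : ℝ :=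
  2 * dotv (Zv Φ x h r σ) (Yv Φ x h r σ)

open Classical in
def gam1 (Φ : Matrix (Fin m) (Fin N) ℝ) (x : Fin N → ℝ) (h : ℕ) (δ : ℝ) (j : Fin N)
    (σ : Fin N → Bool) : ℝ :=
  ind Φ x h δ (blk x h j) σ * (2 * x j * dotv (colv Φ j) (Vv Φ x h (blk x h j) σ))

open Classical in
def gam2 (Φ : Matrix (Fin m) (Fin N) ℝ) (x : Fin N → ℝ) (h : ℕ) (δ : ℝ) (j : Fin N)
    (σ : Fin N → Bool) : ℝ :=
  ind Φ x h δ (blk x h j) σ * (2 * x j * dotv (colv Φ j) (Zv Φ x h (blk x h j) σ))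

-- ===== basic lemmas =====
section basic
variable (Φ : Matrix (Fin m) (Fin N) ℝ) (x : Fin N → ℝ) (h : ℕ) (σ : Fin N → Bool)

lemma dotv_comm {d : ℕ} (u v : Fin d → ℝ) : dotv u v = dotv v u :=
  Finset.sum_congr rfl fun i _ => mul_comm _ _

lemma dotv_add_right {d : ℕ} (u v w : Fin d → ℝ) : dotv u (v + w) = dotv u v + dotv u w := by
  unfold dotv
  rw [← Finset.sum_add_distrib]
  exact Finset.sum_congr rfl fun i _ => by simp [Pi.add_apply]; ring

lemma dotv_sum_left {d : ℕ} {ι : Type} (T : Finset ι) (c : ι → ℝ) (F : ι → Fin d → ℝ)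
    (v : Fin d → ℝ) :
    dotv (fun i => ∑ t ∈ T, c t * F t i) v = ∑ t ∈ T, c t * dotv (F t) v := by
  unfold dotv
  simp only [Finset.sum_mul, Finset.mul_sum]
  rw [Finset.sum_comm]
  exact Finset.sum_congr rfl fun t _ => Finset.sum_congr rfl fun i _ => by ring

lemma Zp_zero : Zp x h 0 σ = 0 := by
  funext j; simp [Zp]

lemma Vv_zero : Vv Φ x h 0 σ = 0 := by
  unfold Vv
  rw [Zp_zero]
  exact Matrix.mulVec_zero Φ

lemma Zp_succ (r : ℕ) : Zp x h (r+1) σ = Zp x h r σ + zb x h r σ := by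
  funext j
  simp only [Zp, zb, Pi.add_apply]
  rcases lt_trichotomy (blk x h j) r with hlt | heq | hgt
  · rw [if_pos (by omega), if_pos hlt, if_neg (by omega), add_zero]
  · rw [if_pos (by omega), if_neg (by omega), if_pos heq, zero_add]
  · rw [if_neg (by omega), if_neg (by omega), if_neg (by omega), add_zero]

lemma Vv_succ (r : ℕ) : Vv Φ x h (r+1) σ = Vv Φ x h r σ + Yv Φ x h r σ := by
  unfold Vv Yv
  rw [Zp_succ, Matrix.mulVec_add]

lemma Zp_full (hh : 1 ≤ h) : Zp x h N σ = fun j => sgnb (σ j) * x j := by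
  funext j
  simp only [Zp]
  rw [if_pos (blk_lt x hh j)]

lemma sqNorm_zb (t : ℕ) : sqNorm (zb x h t σ) = Sb x h t := by
  unfold sqNorm zb Sb
  rw [← Finset.sum_filter_add_sum_filter_not Finset.univ (fun j => blk x h j = t)]
  have h2 : ∑ j ∈ Finset.univ.filter (fun j => ¬ blk x h j = t),
      (if blk x h j = t then sgnb (σ j) * x j else 0) ^ 2 = 0 := by
    apply Finset.sum_eq_zero
    intro j hj
    rw [Finset.mem_filter] at hj
    rw [if_neg hj.2]
    ring
  rw [h2, add_zero]
  apply Finset.sum_congr rfl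
  intro j hj
  rw [Finset.mem_filter] at hj
  rw [if_pos hj.2, mul_pow, sgnb_sq, one_mul]

lemma supp_zb (t : ℕ) : ∀ j, zb x h t σ j ≠ 0 → j ∈ Bt x h t := by
  intro j hj
  rw [mem_Bt_iff]
  by_contra hc
  simp [zb, hc] at hj

lemma sqNorm_mask (t : ℕ) (f : Fin N → ℝ) :
    sqNorm (fun j => if blk x h j = t then f j else 0) = ∑ j ∈ Bt x h t, f j ^ 2 := by
  unfold sqNorm Bt
  rw [← Finset.sum_filter_add_sum_filter_not Finset.univ (fun j => blk x h j = t)]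
  have h2 : ∑ j ∈ Finset.univ.filter (fun j => ¬ blk x h j = t),
      (if blk x h j = t then f j else 0) ^ 2 = 0 := by
    apply Finset.sum_eq_zero
    intro j hj
    rw [Finset.mem_filter] at hj
    rw [if_neg hj.2]
    ring
  rw [h2, add_zero]
  apply Finset.sum_congr (by apply Finset.filter_congr_decidable) _
  intro j hj
  rw [Finset.mem_filter] at hj
  simp only
  rw [if_pos hj.2]

end basic

-- ===== agreement lemmas =====
section agree
variable (Φ : Matrix (Fin m) (Fin N) ℝ) (x : Fin N → ℝ) (h : ℕ) (δ : ℝ)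
variable {σ σ' : Fin N → Bool}

lemma agree_Zp {r : ℕ} (hag : ∀ i, blk x h i < r → σ i = σ' i) :
    Zp x h r σ = Zp x h r σ' := by
  funext j
  simp only [Zp]
  by_cases hb : blk x h j < r
  · rw [if_pos hb, if_pos hb, hag j hb]
  · rw [if_neg hb, if_neg hb]

lemma agree_Vv {r : ℕ} (hag : ∀ i, blk x h i < r → σ i = σ' i) :
    Vv Φ x h r σ = Vv Φ x h r σ' := by
  unfold Vv
  rw [agree_Zp x h hag]

lemma agree_wv {t r : ℕ} (hag : ∀ i, blk x h i < r → σ i = σ' i) :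
    wv Φ x h t r σ = wv Φ x h t r σ' := by
  unfold wv
  have : Vv Φ x h (min r t) σ = Vv Φ x h (min r t) σ' :=
    agree_Vv Φ x h (fun i hi => hag i (lt_of_lt_of_le hi (min_le_left _ _)))
  rw [this]

lemma agree_Vp {r : ℕ} (hag : ∀ i, blk x h i < r → σ i = σ' i) :
    Vp Φ x h r σ = Vp Φ x h r σ' := by
  unfold Vp
  exact Finset.sum_congr rfl fun t _ => by rw [agree_wv Φ x h hag]

lemma agree_Zv {r : ℕ} (hag : ∀ i, blk x h i < r → σ i = σ' i) :
    Zv Φ x h r σ = Zv Φ x h r σ' := by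
  unfold Zv
  funext i
  exact Finset.sum_congr rfl fun t _ => by rw [agree_wv Φ x h hag]

lemma agree_ind {t : ℕ} (hag : ∀ i, blk x h i < t → σ i = σ' i) :
    ind Φ x h δ t σ = ind Φ x h δ t σ' := by
  unfold ind
  have : Gd Φ x h δ t σ ↔ Gd Φ x h δ t σ' := by
    unfold Gd
    constructor <;> intro hG r' hr'
    · rw [← agree_Vp Φ x h (fun i hi => hag i (lt_of_lt_of_le hi hr'))]
      exact hG r' hr'
    · rw [agree_Vp Φ x h (fun i hi => hag i (lt_of_lt_of_le hi hr'))]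
      exact hG r' hr'
  by_cases hg : Gd Φ x h δ t σ
  · rw [if_pos hg, if_pos (this.mp hg)]
  · rw [if_neg hg, if_neg (fun hc => hg (this.mpr hc))]

lemma agree_gam1 (j : Fin N) (hag : ∀ i, blk x h i < blk x h j → σ i = σ' i) :
    gam1 Φ x h δ j σ = gam1 Φ x h δ j σ' := by
  unfold gam1
  rw [agree_ind Φ x h δ hag, agree_Vv Φ x h hag]

lemma agree_gam2 (j : Fin N) (hag : ∀ i, blk x h i < blk x h j → σ i = σ' i) :
    gam2 Φ x h δ j σ = gam2 Φ x h δ j σ' := by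
  unfold gam2
  rw [agree_ind Φ x h δ hag, agree_Zv Φ x h hag]

end agree

-- ===== quantitative lemmas =====
section quant
variable {k : ℕ} {Φ : Matrix (Fin m) (Fin N) ℝ} {x : Fin N → ℝ} {h : ℕ} {δ : ℝ}
variable (σ : Fin N → Bool)

-- RIP on a block
lemma rip_block (hRIP : HasRIP Φ k δ) (hh : 1 ≤ h) (hhk : 2 * h ≤ k) (t : ℕ) :
    (1 - δ) * Sb x h t ≤ sqNorm (Yv Φ x h t σ) ∧
      sqNorm (Yv Φ x h t σ) ≤ (1 + δ) * Sb x h t := by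
  have hcard : (Finset.univ.filter fun j => zb x h t σ j ≠ 0).card ≤ k := by
    calc (Finset.univ.filter fun j => zb x h t σ j ≠ 0).card ≤ (Bt x h t).card := by
          apply Finset.card_le_card
          intro j hj
          rw [Finset.mem_filter] at hj
          exact supp_zb x h σ t j hj.2
      _ ≤ h := card_Bt x hh t
      _ ≤ k := by omega
  have := hRIP (zb x h t σ) hcard
  rw [sqNorm_zb] at this
  exact this

-- expansion of the full square
lemma expand_sq (r : ℕ) :
    sqNorm (Vv Φ x h r σ) = ∑ t ∈ Finset.range r, (sqNorm (Yv Φ x h t σ) + Dv Φ x h t σ) := by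
  induction r with
  | zero => rw [Vv_zero]; simp [sqNorm]
  | succ n ihn =>
    rw [Vv_succ, sqNorm_add, Finset.sum_range_succ, ihn, Dv]
    ring

lemma sum_mask {x : Fin N → ℝ} {h : ℕ} (t : ℕ) (f : Fin N → ℝ) :
    ∑ j, (if blk x h j = t then f j else 0) = ∑ j ∈ Bt x h t, f j := by
  rw [← Finset.sum_filter_add_sum_filter_not Finset.univ (fun j => blk x h j = t)]
  have hz : ∑ j ∈ Finset.univ.filter (fun j => ¬ blk x h j = t),
      (if blk x h j = t then f j else 0) = 0 := by
    apply Finset.sum_eq_zero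
    intro j hj
    rw [Finset.mem_filter] at hj
    rw [if_neg hj.2]
  rw [hz, add_zero]
  apply Finset.sum_congr (by unfold Bt; apply Finset.filter_congr_decidable)
  intro j hj
  rw [if_pos (mem_Bt_iff.mp hj)]

-- sum over a block of sgn * coefficient = inner product vs Yv
lemma block_sum_dot (t : ℕ) (v : Fin m → ℝ) :
    ∑ j ∈ Bt x h t, sgnb (σ j) * (2 * x j * dotv (colv Φ j) v)
      = 2 * dotv v (Yv Φ x h t σ) := by
  have h1 : ∀ j, zb x h t σ j * dotv (fun i => Φ i j) v
      = if blk x h j = t then sgnb (σ j) * x j * dotv (colv Φ j) v else 0 := by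
    intro j
    unfold zb colv
    by_cases hb : blk x h j = t
    · rw [if_pos hb, if_pos hb]
    · rw [if_neg hb, if_neg hb, zero_mul]
  rw [dotv_comm v (Yv Φ x h t σ), Yv, dotv_mulVec_swap]
  rw [Finset.sum_congr rfl fun j (_ : j ∈ Finset.univ) => h1 j]
  rw [sum_mask t (fun j => sgnb (σ j) * x j * dotv (colv Φ j) v)]
  rw [Finset.mul_sum]
  exact Finset.sum_congr rfl fun j _ => by ring

lemma dotv_zero_right {d : ℕ} (u : Fin d → ℝ) : dotv u 0 = 0 := by
  unfold dotv
  apply Finset.sum_eq_zero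
  intro i _
  simp

lemma wv_r_zero (Φ : Matrix (Fin m) (Fin N) ℝ) (x : Fin N → ℝ) (h t : ℕ) :
    wv Φ x h t 0 σ = 0 := by
  funext j
  unfold wv
  rw [Nat.min_comm, Nat.min_zero, Vv_zero, dotv_zero_right]
  simp

lemma Vp_zero (Φ : Matrix (Fin m) (Fin N) ℝ) (x : Fin N → ℝ) (h : ℕ) :
    Vp Φ x h 0 σ = 0 := by
  unfold Vp
  apply Finset.sum_eq_zero
  intro t _
  rw [wv_r_zero]
  have : sqNorm (0 : Fin N → ℝ) = 0 := by
    unfold sqNorm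
    apply Finset.sum_eq_zero
    intro i _
    simp
  rw [this, mul_zero]

lemma Zv_zero (Φ : Matrix (Fin m) (Fin N) ℝ) (x : Fin N → ℝ) (h : ℕ) :
    Zv Φ x h 0 σ = 0 := by
  funext i
  unfold Zv
  apply Finset.sum_eq_zero
  intro t _
  rw [wv_r_zero]
  rw [Matrix.mulVec_zero]
  simp

lemma ind_sq (Φ : Matrix (Fin m) (Fin N) ℝ) (x : Fin N → ℝ) (h : ℕ) (δ : ℝ) (t : ℕ) :
    ind Φ x h δ t σ ^ 2 = ind Φ x h δ t σ := by
  unfold ind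
  split <;> norm_num

lemma ind_nonneg (Φ : Matrix (Fin m) (Fin N) ℝ) (x : Fin N → ℝ) (h : ℕ) (δ : ℝ) (t : ℕ) :
    0 ≤ ind Φ x h δ t σ := by
  unfold ind
  split <;> norm_num

lemma sum_gam1 {Φ : Matrix (Fin m) (Fin N) ℝ} {x : Fin N → ℝ} {h : ℕ} {δ : ℝ} (hh : 1 ≤ h) :
    ∑ j, sgnb (σ j) * gam1 Φ x h δ j σ
      = ∑ t ∈ Finset.range N, ind Φ x h δ t σ * Dv Φ x h t σ := by
  rw [← Finset.sum_fiberwise_of_maps_to (fun j (_ : j ∈ Finset.univ) =>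
    Finset.mem_range.mpr (blk_lt x hh j)) (fun j => sgnb (σ j) * gam1 Φ x h δ j σ)]
  apply Finset.sum_congr rfl
  intro t _
  have hBt : Finset.univ.filter (fun j => blk x h j = t) = Bt x h t := by
    unfold Bt; apply Finset.filter_congr_decidable
  rw [hBt]
  have h1 : ∀ j ∈ Bt x h t, sgnb (σ j) * gam1 Φ x h δ j σ
      = ind Φ x h δ t σ * (sgnb (σ j) * (2 * x j * dotv (colv Φ j) (Vv Φ x h t σ))) := by
    intro j hj
    unfold gam1
    rw [mem_Bt_iff.mp hj]
    ring
  rw [Finset.sum_congr rfl h1, ← Finset.mul_sum, block_sum_dot σ t (Vv Φ x h t σ), ← Dv]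

lemma sum_gam2 {Φ : Matrix (Fin m) (Fin N) ℝ} {x : Fin N → ℝ} {h : ℕ} {δ : ℝ} (hh : 1 ≤ h) :
    ∑ j, sgnb (σ j) * gam2 Φ x h δ j σ
      = ∑ t ∈ Finset.range N, ind Φ x h δ t σ * mv Φ x h t σ := by
  rw [← Finset.sum_fiberwise_of_maps_to (fun j (_ : j ∈ Finset.univ) =>
    Finset.mem_range.mpr (blk_lt x hh j)) (fun j => sgnb (σ j) * gam2 Φ x h δ j σ)]
  apply Finset.sum_congr rfl
  intro t _
  have hBt : Finset.univ.filter (fun j => blk x h j = t) = Bt x h t := by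
    unfold Bt; apply Finset.filter_congr_decidable
  rw [hBt]
  have h1 : ∀ j ∈ Bt x h t, sgnb (σ j) * gam2 Φ x h δ j σ
      = ind Φ x h δ t σ * (sgnb (σ j) * (2 * x j * dotv (colv Φ j) (Zv Φ x h t σ))) := by
    intro j hj
    unfold gam2
    rw [mem_Bt_iff.mp hj]
    ring
  rw [Finset.sum_congr rfl h1, ← Finset.mul_sum, block_sum_dot σ t (Zv Φ x h t σ), ← mv]

lemma supp_wv {Φ : Matrix (Fin m) (Fin N) ℝ} {x : Fin N → ℝ} {h : ℕ} (t r : ℕ) :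
    ∀ j, wv Φ x h t r σ j ≠ 0 → j ∈ Bt x h t := by
  intro j hj
  rw [mem_Bt_iff]
  by_contra hc
  simp [wv, hc] at hj

lemma Vp_succ_le {k : ℕ} {Φ : Matrix (Fin m) (Fin N) ℝ} {x : Fin N → ℝ} {h : ℕ} {δ : ℝ}
    (hRIP : HasRIP Φ k δ) (hh : 1 ≤ h) (hhk : 2 * h ≤ k) (hx : sqNorm x = 1) (r : ℕ) :
    Vp Φ x h (r+1) σ ≤ Vp Φ x h r σ + mv Φ x h r σ + δ^2 * Sb x h r := by
  classical
  set dt : ℕ → Fin N → ℝ := fun t j =>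
    if blk x h j = t then dotv (colv Φ j) (Yv Φ x h r σ) else 0 with hdt
  -- step 1 : pointwise evolution of wv
  have hwv_eq : ∀ t, ¬ r < t → wv Φ x h t (r+1) σ = wv Φ x h t r σ := by
    intro t hrt
    unfold wv
    have h1 : min (r+1) t = t := by omega
    have h2 : min r t = t := by omega
    rw [h1, h2]
  have hwv_succ : ∀ t, r < t → wv Φ x h t (r+1) σ = wv Φ x h t r σ + dt t := by
    intro t hrt
    funext j
    simp only [wv, Pi.add_apply, hdt]
    have h1 : min (r+1) t = r+1 := by omega
    have h2 : min r t = r := by omega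
    rw [h1, h2]
    by_cases hb : blk x h j = t
    · rw [if_pos hb, if_pos hb, if_pos hb, Vv_succ, dotv_add_right]
    · rw [if_neg hb, if_neg hb, if_neg hb, add_zero]
  -- step 2 : sum splitting
  have hsplit : Vp Φ x h (r+1) σ = Vp Φ x h r σ
      + ∑ t ∈ Finset.range N, (if r < t then Wb x h t else 0) * (2 * dotv (wv Φ x h t r σ) (dt t))
      + ∑ t ∈ Finset.range N, (if r < t then Wb x h t else 0) * sqNorm (dt t) := by
    unfold Vp
    rw [← Finset.sum_add_distrib, ← Finset.sum_add_distrib]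
    apply Finset.sum_congr rfl
    intro t _
    by_cases hrt : r < t
    · rw [hwv_succ t hrt, sqNorm_add, if_pos hrt]
      ring
    · rw [hwv_eq t hrt, if_neg hrt]
      ring
  -- step 3 : middle term equals mv
  have hmid : ∑ t ∈ Finset.range N, (if r < t then Wb x h t else 0)
      * (2 * dotv (wv Φ x h t r σ) (dt t)) = mv Φ x h r σ := by
    have hdot_eq : ∀ t, dotv (wv Φ x h t r σ) (dt t)
        = dotv (Φ.mulVec (wv Φ x h t r σ)) (Yv Φ x h r σ) := by
      intro t
      rw [dotv_mulVec_swap]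
      apply Finset.sum_congr rfl
      intro j _
      simp only [hdt]
      by_cases hb : blk x h j = t
      · rw [if_pos hb]
        rfl
      · have : wv Φ x h t r σ j = 0 := by simp [wv, hb]
        rw [this, if_neg hb, zero_mul, zero_mul]
    unfold mv Zv
    rw [dotv_sum_left]
    rw [Finset.mul_sum]
    apply Finset.sum_congr rfl
    intro t _
    rw [hdot_eq t]
    ring
  -- step 4 : last term bounded
  have hlast : ∑ t ∈ Finset.range N, (if r < t then Wb x h t else 0) * sqNorm (dt t)
      ≤ δ^2 * Sb x h r := by
    have hterm : ∀ t ∈ Finset.range N, (if r < t then Wb x h t else 0) * sqNorm (dt t)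
        ≤ Wb x h t * (δ^2 * Sb x h r) := by
      intro t _
      by_cases hrt : r < t
      · rw [if_pos hrt]
        apply mul_le_mul_of_nonneg_left _ (Wb_nonneg x h t)
        have hsq : sqNorm (dt t) = ∑ j ∈ Bt x h t,
            (dotv (fun i => Φ i j) (Φ.mulVec (zb x h r σ)))^2 := by
          rw [hdt]
          exact sqNorm_mask x h t _
        rw [hsq]
        have := rop_op hRIP (zb x h r σ) (Bt x h r) (Bt x h t)
          (supp_zb x h σ r)
          (fun j hjr hjt => by
            rw [mem_Bt_iff] at hjr hjt
            omega)
          (by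
            have h1 := card_Bt x hh r
            have h2 := card_Bt x hh t
            omega)
        rw [sqNorm_zb] at this
        exact this
      · rw [if_neg hrt, zero_mul]
        apply mul_nonneg (Wb_nonneg x h t)
        apply mul_nonneg (sq_nonneg δ) (Sb_nonneg x h r)
    calc ∑ t ∈ Finset.range N, (if r < t then Wb x h t else 0) * sqNorm (dt t)
        ≤ ∑ t ∈ Finset.range N, Wb x h t * (δ^2 * Sb x h r) := Finset.sum_le_sum hterm
      _ = (∑ t ∈ Finset.range N, Wb x h t) * (δ^2 * Sb x h r) := by rw [Finset.sum_mul]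
      _ ≤ 1 * (δ^2 * Sb x h r) := by
          apply mul_le_mul_of_nonneg_right _ (mul_nonneg (sq_nonneg δ) (Sb_nonneg x h r))
          rw [← hx]
          exact sum_Wb_le x hh
      _ = δ^2 * Sb x h r := one_mul _
  rw [hsplit, hmid]
  linarith

lemma sqNorm_zero' {d : ℕ} : sqNorm (0 : Fin d → ℝ) = 0 := by
  unfold sqNorm
  apply Finset.sum_eq_zero
  intro i _
  simp

lemma sqNorm_nonneg'' {d : ℕ} (v : Fin d → ℝ) : 0 ≤ sqNorm v := sqNorm_nonneg v

lemma ind_eq_one_iff {Φ : Matrix (Fin m) (Fin N) ℝ} {x : Fin N → ℝ} {h : ℕ} {δ : ℝ} {t : ℕ} :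
    ind Φ x h δ t σ = 1 ↔ Gd Φ x h δ t σ := by
  unfold ind
  split
  · simp_all
  · simp_all

lemma wv_tt_eq {Φ : Matrix (Fin m) (Fin N) ℝ} {x : Fin N → ℝ} {h : ℕ} {t r : ℕ} (htr : t ≤ r) :
    wv Φ x h t r σ = wv Φ x h t t σ := by
  unfold wv
  have h1 : min r t = t := by omega
  have h2 : min t t = t := min_self t
  rw [h1, h2]

lemma prefix_bound {Φ : Matrix (Fin m) (Fin N) ℝ} {x : Fin N → ℝ} {h : ℕ} {δ : ℝ}
    (hd : 0 ≤ δ) :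
    ∑ t ∈ Finset.range N, ind Φ x h δ t σ * (Wb x h t * sqNorm (wv Φ x h t t σ))
      ≤ 3 * δ^2 := by
  classical
  by_cases hex : ∃ r, r ≤ N ∧ ¬ (Vp Φ x h r σ ≤ 3 * δ^2)
  · set R := Nat.find hex with hR
    obtain ⟨hRN, hRbad⟩ := Nat.find_spec hex
    have hmin : ∀ r < R, Vp Φ x h r σ ≤ 3 * δ^2 := by
      intro r hr
      have := Nat.find_min hex hr
      push_neg at this
      exact this (by omega)
    have hR1 : 1 ≤ R := by
      rcases Nat.eq_zero_or_pos R with h0 | h1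
      · exfalso
        apply hRbad
        rw [← hR, h0, Vp_zero]
        positivity
      · exact h1
    have hind : ∀ t, ind Φ x h δ t σ = if t < R then 1 else 0 := by
      intro t
      by_cases htR : t < R
      · rw [if_pos htR, ind_eq_one_iff]
        intro r' hr'
        exact hmin r' (by omega)
      · rw [if_neg htR]
        unfold ind
        rw [if_neg]
        intro hG
        exact hRbad (hG R (by omega))
    calc ∑ t ∈ Finset.range N, ind Φ x h δ t σ * (Wb x h t * sqNorm (wv Φ x h t t σ))
        = ∑ t ∈ Finset.range N, (if t < R then Wb x h t * sqNorm (wv Φ x h t t σ) else 0) := by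
          apply Finset.sum_congr rfl
          intro t _
          rw [hind t]
          split <;> simp
      _ = ∑ t ∈ (Finset.range N).filter (fun t => t < R), Wb x h t * sqNorm (wv Φ x h t t σ) := by
          rw [Finset.sum_filter]
      _ = ∑ t ∈ Finset.range R, Wb x h t * sqNorm (wv Φ x h t t σ) := by
          congr 1
          ext t
          simp only [Finset.mem_filter, Finset.mem_range]
          omega
      _ = ∑ t ∈ Finset.range R, Wb x h t * sqNorm (wv Φ x h t (R-1) σ) := by
          apply Finset.sum_congr rfl
          intro t ht
          rw [Finset.mem_range] at ht
          rw [wv_tt_eq σ (by omega : t ≤ R - 1)]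
      _ ≤ ∑ t ∈ Finset.range N, Wb x h t * sqNorm (wv Φ x h t (R-1) σ) := by
          apply Finset.sum_le_sum_of_subset_of_nonneg
          · apply Finset.range_subset_range.mpr
            omega
          · intro t _ _
            exact mul_nonneg (Wb_nonneg x h t) (sqNorm_nonneg _)
      _ = Vp Φ x h (R-1) σ := rfl
      _ ≤ 3 * δ^2 := hmin (R-1) (by omega)
  · push_neg at hex
    calc ∑ t ∈ Finset.range N, ind Φ x h δ t σ * (Wb x h t * sqNorm (wv Φ x h t t σ))
        = ∑ t ∈ Finset.range N, Wb x h t * sqNorm (wv Φ x h t N σ) := by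
          apply Finset.sum_congr rfl
          intro t ht
          rw [Finset.mem_range] at ht
          have h1 : ind Φ x h δ t σ = 1 := by
            rw [ind_eq_one_iff]
            intro r' hr'
            exact hex r' (by omega)
          rw [h1, one_mul, wv_tt_eq σ (by omega : t ≤ N)]
      _ = Vp Φ x h N σ := rfl
      _ ≤ 3 * δ^2 := hex N (le_refl N)

lemma var_gam1 {Φ : Matrix (Fin m) (Fin N) ℝ} {x : Fin N → ℝ} {h : ℕ} {δ : ℝ}
    (hh : 1 ≤ h) (hd : 0 ≤ δ) :
    ∑ j, (gam1 Φ x h δ j σ)^2 ≤ 12 * δ^2 / h := by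
  classical
  rw [← Finset.sum_fiberwise_of_maps_to (fun j (_ : j ∈ Finset.univ) =>
    Finset.mem_range.mpr (blk_lt x hh j)) (fun j => (gam1 Φ x h δ j σ)^2)]
  have hBt : ∀ t, Finset.univ.filter (fun j => blk x h j = t) = Bt x h t := by
    intro t; unfold Bt; apply Finset.filter_congr_decidable
  have hblock : ∀ t ∈ Finset.range N, ∑ j ∈ Bt x h t, (gam1 Φ x h δ j σ)^2
      ≤ (4 / h) * (ind Φ x h δ t σ * (Wb x h t * sqNorm (wv Φ x h t t σ))) := by
    intro t _
    rcases Nat.eq_zero_or_pos t with rfl | ht1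
    · have hz : ∀ j ∈ Bt x h 0, (gam1 Φ x h δ j σ)^2 = 0 := by
        intro j hj
        unfold gam1
        rw [mem_Bt_iff.mp hj, Vv_zero, dotv_zero_right]
        ring
      rw [Finset.sum_congr rfl hz, Finset.sum_const, smul_zero]
      have h1 := ind_nonneg σ Φ x h δ 0
      have h2 := Wb_nonneg x h 0
      have h3 := sqNorm_nonneg (wv Φ x h 0 0 σ)
      positivity
    · have hterm : ∀ j ∈ Bt x h t, (gam1 Φ x h δ j σ)^2
          ≤ ind Φ x h δ t σ * (4 * (Wb x h t / h) * (dotv (colv Φ j) (Vv Φ x h t σ))^2) := by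
        intro j hj
        have hjt := mem_Bt_iff.mp hj
        unfold gam1
        rw [hjt]
        rw [mul_pow, ind_sq]
        apply mul_le_mul_of_nonneg_left _ (ind_nonneg σ Φ x h δ t)
        have hx2 : x j ^ 2 ≤ Wb x h t / h := by
          have := key_max x hh ht1 hj
          rw [Wb, if_neg (by omega)]
          rw [le_div_iff₀ (by exact_mod_cast hh : (0:ℝ) < h)]
          linarith
        calc (2 * x j * dotv (colv Φ j) (Vv Φ x h t σ))^2
            = 4 * x j ^2 * (dotv (colv Φ j) (Vv Φ x h t σ))^2 := by ring
          _ ≤ 4 * (Wb x h t / h) * (dotv (colv Φ j) (Vv Φ x h t σ))^2 := by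
              apply mul_le_mul_of_nonneg_right _ (sq_nonneg _)
              linarith
      calc ∑ j ∈ Bt x h t, (gam1 Φ x h δ j σ)^2
          ≤ ∑ j ∈ Bt x h t, ind Φ x h δ t σ
            * (4 * (Wb x h t / h) * (dotv (colv Φ j) (Vv Φ x h t σ))^2) :=
            Finset.sum_le_sum hterm
        _ = (4/h) * (ind Φ x h δ t σ * (Wb x h t
            * ∑ j ∈ Bt x h t, (dotv (colv Φ j) (Vv Φ x h t σ))^2)) := by
            rw [Finset.mul_sum, Finset.mul_sum, Finset.mul_sum]
            apply Finset.sum_congr rfl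
            intro j _
            ring
        _ = (4/h) * (ind Φ x h δ t σ * (Wb x h t * sqNorm (wv Φ x h t t σ))) := by
            have : sqNorm (wv Φ x h t t σ)
                = ∑ j ∈ Bt x h t, (dotv (colv Φ j) (Vv Φ x h t σ))^2 := by
              unfold wv
              rw [min_self]
              exact sqNorm_mask x h t _
            rw [this]
  calc ∑ t ∈ Finset.range N, ∑ j ∈ Finset.univ.filter (fun j => blk x h j = t),
        (gam1 Φ x h δ j σ)^2
      = ∑ t ∈ Finset.range N, ∑ j ∈ Bt x h t, (gam1 Φ x h δ j σ)^2 := by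
        apply Finset.sum_congr rfl
        intro t _
        rw [hBt t]
    _ ≤ ∑ t ∈ Finset.range N, (4 / h) * (ind Φ x h δ t σ
        * (Wb x h t * sqNorm (wv Φ x h t t σ))) := Finset.sum_le_sum hblock
    _ = (4 / h) * ∑ t ∈ Finset.range N, ind Φ x h δ t σ
        * (Wb x h t * sqNorm (wv Φ x h t t σ)) := by rw [Finset.mul_sum]
    _ ≤ (4 / h) * (3 * δ^2) := by
        apply mul_le_mul_of_nonneg_left (prefix_bound σ hd)
        positivity
    _ = 12 * δ^2 / h := by ring

lemma dotv_sum_right {d : ℕ} {ι : Type} (T : Finset ι) (c : ι → ℝ) (F : ι → Fin d → ℝ)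
    (v : Fin d → ℝ) :
    dotv v (fun i => ∑ t ∈ T, c t * F t i) = ∑ t ∈ T, c t * dotv v (F t) := by
  rw [dotv_comm, dotv_sum_left]
  exact Finset.sum_congr rfl fun t _ => by rw [dotv_comm]

lemma maskZv {k : ℕ} {Φ : Matrix (Fin m) (Fin N) ℝ} {x : Fin N → ℝ} {h : ℕ} {δ : ℝ}
    (hRIP : HasRIP Φ k δ) (hh : 1 ≤ h) (hhk : 2 * h ≤ k) (hx : sqNorm x = 1) (r : ℕ) :
    ∑ j ∈ Bt x h r, (dotv (colv Φ j) (Zv Φ x h r σ))^2 ≤ δ^2 * Vp Φ x h r σ := by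
  classical
  set c : ℕ → ℝ := fun t => if r < t then Wb x h t else 0 with hc
  have hcnn : ∀ t ∈ Finset.range N, 0 ≤ c t := by
    intro t _
    simp only [hc]
    split
    · exact Wb_nonneg x h t
    · exact le_refl 0
  set q : ℕ → Fin N → ℝ := fun t j =>
    if blk x h j = r then dotv (colv Φ j) (Φ.mulVec (wv Φ x h t r σ)) else 0 with hq
  have hvec : (fun j => if blk x h j = r then dotv (colv Φ j) (Zv Φ x h r σ) else 0)
      = fun j => ∑ t ∈ Finset.range N, c t * q t j := by
    funext j
    by_cases hb : blk x h j = r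
    · rw [if_pos hb]
      unfold Zv
      rw [dotv_sum_right]
      apply Finset.sum_congr rfl
      intro t _
      rw [hq]
      simp only
      rw [if_pos hb]
    · rw [if_neg hb]
      rw [eq_comm]
      apply Finset.sum_eq_zero
      intro t _
      rw [hq]
      simp only
      rw [if_neg hb, mul_zero]
  have h1 : ∑ j ∈ Bt x h r, (dotv (colv Φ j) (Zv Φ x h r σ))^2
      = sqNorm (fun j => ∑ t ∈ Finset.range N, c t * q t j) := by
    rw [← hvec, sqNorm_mask]
  rw [h1]
  have h2 := weighted_cs (Finset.range N) c hcnn q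
  have h3 : ∀ t ∈ Finset.range N, c t * sqNorm (q t) ≤ c t * (δ^2 * sqNorm (wv Φ x h t r σ)) := by
    intro t _
    simp only [hc]
    by_cases hrt : r < t
    · simp only [if_pos hrt]
      apply mul_le_mul_of_nonneg_left _ (Wb_nonneg x h t)
      have h4 : sqNorm (q t) = ∑ j ∈ Bt x h r,
          (dotv (fun i => Φ i j) (Φ.mulVec (wv Φ x h t r σ)))^2 := by
        rw [hq]
        exact sqNorm_mask x h r _
      rw [h4]
      exact rop_op hRIP (wv Φ x h t r σ) (Bt x h t) (Bt x h r)
        (supp_wv σ t r)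
        (fun j hjt hjr => by
          rw [mem_Bt_iff] at hjt hjr
          omega)
        (by
          have := card_Bt x hh t
          have := card_Bt x hh r
          omega)
    · simp only [if_neg hrt, zero_mul, le_refl]
  have h5 : ∑ t ∈ Finset.range N, c t ≤ 1 := by
    rw [← hx]
    calc ∑ t ∈ Finset.range N, c t ≤ ∑ t ∈ Finset.range N, Wb x h t := by
          apply Finset.sum_le_sum
          intro t _
          simp only [hc]
          split
          · exact le_refl _
          · exact Wb_nonneg x h t
      _ ≤ sqNorm x := sum_Wb_le x hh
  have h6 : ∑ t ∈ Finset.range N, c t * (δ^2 * sqNorm (wv Φ x h t r σ))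
      ≤ δ^2 * Vp Φ x h r σ := by
    unfold Vp
    rw [Finset.mul_sum]
    apply Finset.sum_le_sum
    intro t _
    simp only [hc]
    by_cases hrt : r < t
    · simp only [if_pos hrt]
      ring_nf
      exact le_refl _
    · simp only [if_neg hrt, zero_mul]
      apply mul_nonneg (sq_nonneg δ)
      exact mul_nonneg (Wb_nonneg x h t) (sqNorm_nonneg _)
  have h7 : 0 ≤ ∑ t ∈ Finset.range N, c t * (δ^2 * sqNorm (wv Φ x h t r σ)) := by
    apply Finset.sum_nonneg
    intro t ht
    exact mul_nonneg (hcnn t ht) (mul_nonneg (sq_nonneg δ) (sqNorm_nonneg _))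
  calc sqNorm (fun j => ∑ t ∈ Finset.range N, c t * q t j)
      ≤ (∑ t ∈ Finset.range N, c t) * ∑ t ∈ Finset.range N, c t * sqNorm (q t) := h2
    _ ≤ (∑ t ∈ Finset.range N, c t) * ∑ t ∈ Finset.range N,
        c t * (δ^2 * sqNorm (wv Φ x h t r σ)) := by
        apply mul_le_mul_of_nonneg_left (Finset.sum_le_sum h3)
        exact Finset.sum_nonneg hcnn
    _ ≤ 1 * ∑ t ∈ Finset.range N, c t * (δ^2 * sqNorm (wv Φ x h t r σ)) := by
        apply mul_le_mul_of_nonneg_right h5 h7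
    _ = ∑ t ∈ Finset.range N, c t * (δ^2 * sqNorm (wv Φ x h t r σ)) := one_mul _
    _ ≤ δ^2 * Vp Φ x h r σ := h6

lemma var_gam2 {k : ℕ} {Φ : Matrix (Fin m) (Fin N) ℝ} {x : Fin N → ℝ} {h : ℕ} {δ : ℝ}
    (hRIP : HasRIP Φ k δ) (hh : 1 ≤ h) (hhk : 2 * h ≤ k) (hx : sqNorm x = 1) (hd : 0 ≤ δ) :
    ∑ j, (gam2 Φ x h δ j σ)^2 ≤ 12 * δ^4 / h := by
  classical
  rw [← Finset.sum_fiberwise_of_maps_to (fun j (_ : j ∈ Finset.univ) =>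
    Finset.mem_range.mpr (blk_lt x hh j)) (fun j => (gam2 Φ x h δ j σ)^2)]
  have hBt : ∀ t, Finset.univ.filter (fun j => blk x h j = t) = Bt x h t := by
    intro t; unfold Bt; apply Finset.filter_congr_decidable
  have hblock : ∀ r ∈ Finset.range N, ∑ j ∈ Bt x h r, (gam2 Φ x h δ j σ)^2
      ≤ (4 / h) * (Wb x h r * (δ^2 * (3 * δ^2))) := by
    intro r _
    rcases Nat.eq_zero_or_pos r with rfl | hr1
    · have hz : ∀ j ∈ Bt x h 0, (gam2 Φ x h δ j σ)^2 = 0 := by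
        intro j hj
        unfold gam2
        rw [mem_Bt_iff.mp hj, Zv_zero, dotv_zero_right]
        ring
      rw [Finset.sum_congr rfl hz, Finset.sum_const, smul_zero]
      have h2 := Wb_nonneg x h 0
      positivity
    · have hterm : ∀ j ∈ Bt x h r, (gam2 Φ x h δ j σ)^2
          ≤ ind Φ x h δ r σ * (4 * (Wb x h r / h) * (dotv (colv Φ j) (Zv Φ x h r σ))^2) := by
        intro j hj
        have hjt := mem_Bt_iff.mp hj
        unfold gam2
        rw [hjt, mul_pow, ind_sq]
        apply mul_le_mul_of_nonneg_left _ (ind_nonneg σ Φ x h δ r)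
        have hx2 : x j ^ 2 ≤ Wb x h r / h := by
          have := key_max x hh hr1 hj
          rw [Wb, if_neg (by omega)]
          rw [le_div_iff₀ (by exact_mod_cast hh : (0:ℝ) < h)]
          linarith
        calc (2 * x j * dotv (colv Φ j) (Zv Φ x h r σ))^2
            = 4 * x j ^2 * (dotv (colv Φ j) (Zv Φ x h r σ))^2 := by ring
          _ ≤ 4 * (Wb x h r / h) * (dotv (colv Φ j) (Zv Φ x h r σ))^2 := by
              apply mul_le_mul_of_nonneg_right _ (sq_nonneg _)
              linarith
      calc ∑ j ∈ Bt x h r, (gam2 Φ x h δ j σ)^2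
          ≤ ∑ j ∈ Bt x h r, ind Φ x h δ r σ
            * (4 * (Wb x h r / h) * (dotv (colv Φ j) (Zv Φ x h r σ))^2) :=
            Finset.sum_le_sum hterm
        _ = (4/h) * (Wb x h r * (ind Φ x h δ r σ
            * ∑ j ∈ Bt x h r, (dotv (colv Φ j) (Zv Φ x h r σ))^2)) := by
            rw [Finset.mul_sum, Finset.mul_sum, Finset.mul_sum]
            apply Finset.sum_congr rfl
            intro j _
            ring
        _ ≤ (4/h) * (Wb x h r * (δ^2 * (3 * δ^2))) := by
            apply mul_le_mul_of_nonneg_left _ (by positivity : (0:ℝ) ≤ 4/h)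
            apply mul_le_mul_of_nonneg_left _ (Wb_nonneg x h r)
            by_cases hind : Gd Φ x h δ r σ
            · have h8 : ind Φ x h δ r σ = 1 := (ind_eq_one_iff σ).mpr hind
              rw [h8, one_mul]
              calc ∑ j ∈ Bt x h r, (dotv (colv Φ j) (Zv Φ x h r σ))^2
                  ≤ δ^2 * Vp Φ x h r σ := maskZv σ hRIP hh hhk hx r
                _ ≤ δ^2 * (3 * δ^2) := by
                    apply mul_le_mul_of_nonneg_left _ (sq_nonneg δ)
                    exact hind r (le_refl r)
            · have h8 : ind Φ x h δ r σ = 0 := by unfold ind; rw [if_neg hind]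
              rw [h8, zero_mul]
              positivity
  calc ∑ t ∈ Finset.range N, ∑ j ∈ Finset.univ.filter (fun j => blk x h j = t),
        (gam2 Φ x h δ j σ)^2
      = ∑ t ∈ Finset.range N, ∑ j ∈ Bt x h t, (gam2 Φ x h δ j σ)^2 := by
        apply Finset.sum_congr rfl
        intro t _
        rw [hBt t]
    _ ≤ ∑ t ∈ Finset.range N, (4 / h) * (Wb x h t * (δ^2 * (3 * δ^2))) :=
        Finset.sum_le_sum hblock
    _ = (4 / h) * (δ^2 * (3 * δ^2)) * ∑ t ∈ Finset.range N, Wb x h t := by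
        rw [Finset.mul_sum]
        apply Finset.sum_congr rfl
        intro t _
        ring
    _ ≤ (4 / h) * (δ^2 * (3 * δ^2)) * 1 := by
        apply mul_le_mul_of_nonneg_left _ (by positivity)
        rw [← hx]
        exact sum_Wb_le x hh
    _ = 12 * δ^4 / h := by ring

lemma catch2 {k : ℕ} {Φ : Matrix (Fin m) (Fin N) ℝ} {x : Fin N → ℝ} {h : ℕ} {δ : ℝ}
    (hRIP : HasRIP Φ k δ) (hh : 1 ≤ h) (hhk : 2 * h ≤ k) (hx : sqNorm x = 1) (hd : 0 ≤ δ)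
    (hbad : ¬ Gd Φ x h δ N σ) :
    2 * δ^2 ≤ ∑ j, sgnb (σ j) * gam2 Φ x h δ j σ := by
  classical
  rw [sum_gam2 σ hh]
  unfold Gd at hbad
  push_neg at hbad
  have hex : ∃ r, r ≤ N ∧ ¬ (Vp Φ x h r σ ≤ 3 * δ^2) := by
    obtain ⟨r, hr1, hr2⟩ := hbad
    exact ⟨r, hr1, not_le.mpr hr2⟩
  set R := Nat.find hex with hR
  obtain ⟨hRN, hRbad⟩ := Nat.find_spec hex
  have hmin : ∀ r < R, Vp Φ x h r σ ≤ 3 * δ^2 := by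
    intro r hr
    have := Nat.find_min hex hr
    push_neg at this
    exact this (by omega)
  have hR1 : 1 ≤ R := by
    rcases Nat.eq_zero_or_pos R with h0 | h1
    · exfalso
      apply hRbad
      rw [← hR, h0, Vp_zero]
      positivity
    · exact h1
  have hind : ∀ t, ind Φ x h δ t σ = if t < R then 1 else 0 := by
    intro t
    by_cases htR : t < R
    · rw [if_pos htR, ind_eq_one_iff]
      intro r' hr'
      exact hmin r' (by omega)
    · rw [if_neg htR]
      unfold ind
      rw [if_neg]
      intro hG
      exact hRbad (hG R (by omega))
  have hsum_eq : ∑ t ∈ Finset.range N, ind Φ x h δ t σ * mv Φ x h t σ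
      = ∑ r ∈ Finset.range R, mv Φ x h r σ := by
    calc ∑ t ∈ Finset.range N, ind Φ x h δ t σ * mv Φ x h t σ
        = ∑ t ∈ Finset.range N, (if t < R then mv Φ x h t σ else 0) := by
          apply Finset.sum_congr rfl
          intro t _
          rw [hind t]
          split <;> simp
      _ = ∑ t ∈ (Finset.range N).filter (fun t => t < R), mv Φ x h t σ := by
          rw [Finset.sum_filter]
      _ = ∑ r ∈ Finset.range R, mv Φ x h r σ := by
          congr 1
          ext t
          simp only [Finset.mem_filter, Finset.mem_range]
          omega
  rw [hsum_eq]
  -- telescoping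
  have htel : Vp Φ x h R σ - Vp Φ x h 0 σ
      = ∑ r ∈ Finset.range R, (Vp Φ x h (r+1) σ - Vp Φ x h r σ) := by
    rw [Finset.sum_range_sub (fun r => Vp Φ x h r σ) R]
  have hstep : ∀ r ∈ Finset.range R, Vp Φ x h (r+1) σ - Vp Φ x h r σ
      ≤ mv Φ x h r σ + δ^2 * Sb x h r := by
    intro r _
    have := Vp_succ_le σ hRIP hh hhk hx r
    linarith
  have hSsum : ∑ r ∈ Finset.range R, Sb x h r ≤ 1 := by
    rw [← hx, ← sum_Sb x hh]
    apply Finset.sum_le_sum_of_subset_of_nonneg (Finset.range_subset_range.mpr hRN)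
    intro t _ _
    exact Sb_nonneg x h t
  have hVpR : 3 * δ^2 < Vp Φ x h R σ := by
    rw [hR]
    exact lt_of_not_ge hRbad
  have h0 : Vp Φ x h 0 σ = 0 := Vp_zero σ Φ x h
  have hchain : Vp Φ x h R σ ≤ (∑ r ∈ Finset.range R, mv Φ x h r σ) + δ^2 := by
    calc Vp Φ x h R σ = ∑ r ∈ Finset.range R, (Vp Φ x h (r+1) σ - Vp Φ x h r σ) := by
          rw [← htel, h0]; ring
      _ ≤ ∑ r ∈ Finset.range R, (mv Φ x h r σ + δ^2 * Sb x h r) := Finset.sum_le_sum hstep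
      _ = (∑ r ∈ Finset.range R, mv Φ x h r σ) + δ^2 * ∑ r ∈ Finset.range R, Sb x h r := by
          rw [Finset.sum_add_distrib, Finset.mul_sum]
      _ ≤ (∑ r ∈ Finset.range R, mv Φ x h r σ) + δ^2 := by
          have h9 : δ^2 * ∑ r ∈ Finset.range R, Sb x h r ≤ δ^2 * 1 :=
            mul_le_mul_of_nonneg_left hSsum (sq_nonneg δ)
          linarith
  nlinarith

lemma good_eq {Φ : Matrix (Fin m) (Fin N) ℝ} {x : Fin N → ℝ} {h : ℕ} {δ : ℝ}
    (hh : 1 ≤ h) (hgood : Gd Φ x h δ N σ) :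
    ∑ j, sgnb (σ j) * gam1 Φ x h δ j σ = ∑ t ∈ Finset.range N, Dv Φ x h t σ := by
  rw [sum_gam1 σ hh]
  apply Finset.sum_congr rfl
  intro t ht
  rw [Finset.mem_range] at ht
  have h1 : ind Φ x h δ t σ = 1 := by
    rw [ind_eq_one_iff]
    intro r' hr'
    exact hgood r' (by omega)
  rw [h1, one_mul]

lemma total_eq {Φ : Matrix (Fin m) (Fin N) ℝ} {x : Fin N → ℝ} {h : ℕ} (hh : 1 ≤ h) :
    sqNorm (Φ.mulVec (fun j => sgnb (σ j) * x j))
      = ∑ t ∈ Finset.range N, sqNorm (Yv Φ x h t σ) + ∑ t ∈ Finset.range N, Dv Φ x h t σ := by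
  have h1 : Φ.mulVec (fun j => sgnb (σ j) * x j) = Vv Φ x h N σ := by
    unfold Vv
    rw [Zp_full x h σ hh]
  rw [h1, expand_sq, Finset.sum_add_distrib]

lemma sum_Y_bounds {k : ℕ} {Φ : Matrix (Fin m) (Fin N) ℝ} {x : Fin N → ℝ} {h : ℕ} {δ : ℝ}
    (hRIP : HasRIP Φ k δ) (hh : 1 ≤ h) (hhk : 2 * h ≤ k) (hx : sqNorm x = 1) :
    |∑ t ∈ Finset.range N, sqNorm (Yv Φ x h t σ) - 1| ≤ δ := by
  have hlo : ∀ t ∈ Finset.range N, (1 - δ) * Sb x h t ≤ sqNorm (Yv Φ x h t σ) :=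
    fun t _ => (rip_block σ hRIP hh hhk t).1
  have hhi : ∀ t ∈ Finset.range N, sqNorm (Yv Φ x h t σ) ≤ (1 + δ) * Sb x h t :=
    fun t _ => (rip_block σ hRIP hh hhk t).2
  have hS : ∑ t ∈ Finset.range N, Sb x h t = 1 := by rw [sum_Sb x hh, hx]
  have h1 : 1 - δ ≤ ∑ t ∈ Finset.range N, sqNorm (Yv Φ x h t σ) := by
    calc (1:ℝ) - δ = (1 - δ) * ∑ t ∈ Finset.range N, Sb x h t := by rw [hS]; ring
      _ = ∑ t ∈ Finset.range N, (1 - δ) * Sb x h t := by rw [Finset.mul_sum]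
      _ ≤ ∑ t ∈ Finset.range N, sqNorm (Yv Φ x h t σ) := Finset.sum_le_sum hlo
  have h2 : ∑ t ∈ Finset.range N, sqNorm (Yv Φ x h t σ) ≤ 1 + δ := by
    calc ∑ t ∈ Finset.range N, sqNorm (Yv Φ x h t σ)
        ≤ ∑ t ∈ Finset.range N, (1 + δ) * Sb x h t := Finset.sum_le_sum hhi
      _ = (1 + δ) * ∑ t ∈ Finset.range N, Sb x h t := by rw [Finset.mul_sum]
      _ = 1 + δ := by rw [hS]; ring
  rw [abs_le]
  constructor <;> linarith

theorem count_bad_unit {k h : ℕ} {Φ : Matrix (Fin m) (Fin N) ℝ} {δ : ℝ} {x : Fin N → ℝ}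
    (hRIP : HasRIP Φ k δ) (hd : 0 < δ) (hh : 1 ≤ h) (hhk : 2 * h ≤ k) (hx : sqNorm x = 1) :
    ((Finset.univ.filter fun σ : Fin N → Bool =>
        ¬ |sqNorm (Φ.mulVec (fun j => sgnb (σ j) * x j)) - 1| ≤ 4 * δ).card : ℝ)
      ≤ 3 * 2^N * Real.exp (-(h:ℝ)/6) := by
  classical
  have hhR : (0:ℝ) < h := by exact_mod_cast hh
  set A2 := Finset.univ.filter (fun σ : Fin N → Bool =>
    2 * δ^2 ≤ ∑ j, sgnb (σ j) * gam2 Φ x h δ j σ) with hA2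
  set Ap := Finset.univ.filter (fun σ : Fin N → Bool =>
    3 * δ ≤ ∑ j, sgnb (σ j) * gam1 Φ x h δ j σ) with hAp
  set Am := Finset.univ.filter (fun σ : Fin N → Bool =>
    3 * δ ≤ ∑ j, sgnb (σ j) * (fun j σ => - gam1 Φ x h δ j σ) j σ) with hAm
  -- subset property
  have hsub : (Finset.univ.filter fun σ : Fin N → Bool =>
      ¬ |sqNorm (Φ.mulVec (fun j => sgnb (σ j) * x j)) - 1| ≤ 4 * δ) ⊆ A2 ∪ Ap ∪ Am := by
    intro σ hσ
    rw [Finset.mem_filter] at hσ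
    have hbad := hσ.2
    rw [Finset.mem_union, Finset.mem_union]
    by_cases hG : Gd Φ x h δ N σ
    · -- good event: large linear deviation
      have hM := good_eq σ hh hG
      have hY := sum_Y_bounds σ hRIP hh hhk hx
      have htot := total_eq σ (Φ := Φ) (x := x) hh
      have hMlarge : 3 * δ ≤ |∑ j, sgnb (σ j) * gam1 Φ x h δ j σ| := by
        rw [hM]
        by_contra hc
        push_neg at hc
        apply hbad
        rw [abs_le] at hY ⊢
        rw [abs_lt] at hc
        constructor
        · linarith [htot, hY.1, hc.1]
        · linarith [htot, hY.2, hc.2]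
      rcases le_abs.mp hMlarge with hcase | hcase
      · left; right
        rw [hAp, Finset.mem_filter]
        exact ⟨Finset.mem_univ _, hcase⟩
      · right
        rw [hAm, Finset.mem_filter]
        refine ⟨Finset.mem_univ _, ?_⟩
        have he : ∑ j, sgnb (σ j) * (fun j (σ : Fin N → Bool) => - gam1 Φ x h δ j σ) j σ
            = - ∑ j, sgnb (σ j) * gam1 Φ x h δ j σ := by
          rw [← Finset.sum_neg_distrib]
          exact Finset.sum_congr rfl fun j _ => by ring
        rw [he]
        exact hcase
    · -- bad event caught by level 2
      have := catch2 σ hRIP hh hhk hx hd.le hG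
      left; left
      rw [hA2, Finset.mem_filter]
      exact ⟨Finset.mem_univ _, this⟩
  -- tail bounds
  have hb2 : (A2.card : ℝ) ≤ 2^N * Real.exp (-(h:ℝ)/6) := by
    have hbd := engine_tail (blk x h) (gam2 Φ x h δ)
      (fun j σ σ' hag => agree_gam2 Φ x h δ j hag)
      (12*δ^4/h) (2*δ^2) (h/(6*δ^2)) (by positivity)
      (fun σ => var_gam2 σ hRIP hh hhk hx hd.le)
    rw [hA2]
    refine le_trans hbd ?_
    have hexp_eq : ((h:ℝ)/(6*δ^2))^2 * (12*δ^4/h) / 2 - ((h:ℝ)/(6*δ^2)) * (2*δ^2)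
        = -(h:ℝ)/6 := by
      field_simp
      ring
    rw [hexp_eq]
  have hexp38 : Real.exp (-(3:ℝ)*h/8) ≤ Real.exp (-(h:ℝ)/6) := by
    apply Real.exp_le_exp.mpr
    nlinarith
  have hbp : (Ap.card : ℝ) ≤ 2^N * Real.exp (-(h:ℝ)/6) := by
    have hbd := engine_tail (blk x h) (gam1 Φ x h δ)
      (fun j σ σ' hag => agree_gam1 Φ x h δ j hag)
      (12*δ^2/h) (3*δ) (h/(4*δ)) (by positivity)
      (fun σ => var_gam1 σ hh hd.le)
    rw [hAp]
    refine le_trans hbd ?_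
    have hexp_eq : ((h:ℝ)/(4*δ))^2 * (12*δ^2/h) / 2 - ((h:ℝ)/(4*δ)) * (3*δ)
        = -(3:ℝ)*h/8 := by
      field_simp
      ring
    rw [hexp_eq]
    apply mul_le_mul_of_nonneg_left hexp38 (by positivity)
  have hbm : (Am.card : ℝ) ≤ 2^N * Real.exp (-(h:ℝ)/6) := by
    have hbd := engine_tail (blk x h) (fun j σ => - gam1 Φ x h δ j σ)
      (fun j σ σ' hag => congrArg Neg.neg (agree_gam1 Φ x h δ j hag))
      (12*δ^2/h) (3*δ) (h/(4*δ)) (by positivity)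
      (fun σ => by
        have := var_gam1 σ (Φ := Φ) (x := x) (δ := δ) hh hd.le
        calc ∑ j, ((fun j (σ : Fin N → Bool) => - gam1 Φ x h δ j σ) j σ)^2
            = ∑ j, (gam1 Φ x h δ j σ)^2 :=
              Finset.sum_congr rfl fun j _ => by ring
          _ ≤ 12*δ^2/h := this)
    rw [hAm]
    refine le_trans hbd ?_
    have hexp_eq : ((h:ℝ)/(4*δ))^2 * (12*δ^2/h) / 2 - ((h:ℝ)/(4*δ)) * (3*δ)
        = -(3:ℝ)*h/8 := by
      field_simp
      ring
    rw [hexp_eq]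
    apply mul_le_mul_of_nonneg_left hexp38 (by positivity)
  -- combine
  have hcount : ((Finset.univ.filter fun σ : Fin N → Bool =>
      ¬ |sqNorm (Φ.mulVec (fun j => sgnb (σ j) * x j)) - 1| ≤ 4 * δ).card : ℕ)
      ≤ A2.card + Ap.card + Am.card := by
    calc (Finset.univ.filter fun σ : Fin N → Bool =>
        ¬ |sqNorm (Φ.mulVec (fun j => sgnb (σ j) * x j)) - 1| ≤ 4 * δ).card
        ≤ (A2 ∪ Ap ∪ Am).card := Finset.card_le_card hsub
      _ ≤ (A2 ∪ Ap).card + Am.card := Finset.card_union_le _ _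
      _ ≤ A2.card + Ap.card + Am.card := by
          have := Finset.card_union_le A2 Ap
          omega
  have hcountR : ((Finset.univ.filter fun σ : Fin N → Bool =>
      ¬ |sqNorm (Φ.mulVec (fun j => sgnb (σ j) * x j)) - 1| ≤ 4 * δ).card : ℝ)
      ≤ (A2.card : ℝ) + (Ap.card : ℝ) + (Am.card : ℝ) := by
    exact_mod_cast hcount
  linarith


theorem count_bad_x {k h : ℕ} {Φ : Matrix (Fin m) (Fin N) ℝ} {δ : ℝ}
    (hRIP : HasRIP Φ k δ) (hd : 0 < δ) (hh : 1 ≤ h) (hhk : 2 * h ≤ k) (x : Fin N → ℝ) :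
    ((Finset.univ.filter fun σ : Fin N → Bool =>
        ¬ ((1 - 4*δ) * sqNorm x ≤ sqNorm (Φ.mulVec (fun j => sgnb (σ j) * x j)) ∧
           sqNorm (Φ.mulVec (fun j => sgnb (σ j) * x j)) ≤ (1 + 4*δ) * sqNorm x)).card : ℝ)
      ≤ 3 * 2^N * Real.exp (-(h:ℝ)/6) := by
  classical
  rcases eq_or_ne (sqNorm x) 0 with hx0 | hx0
  · have hxz : x = 0 := sqNorm_eq_zero hx0
    have hempty : (Finset.univ.filter fun σ : Fin N → Bool =>
        ¬ ((1 - 4*δ) * sqNorm x ≤ sqNorm (Φ.mulVec (fun j => sgnb (σ j) * x j)) ∧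
           sqNorm (Φ.mulVec (fun j => sgnb (σ j) * x j)) ≤ (1 + 4*δ) * sqNorm x)) = ∅ := by
      apply Finset.filter_eq_empty_iff.mpr
      intro σ _
      rw [not_not]
      subst hxz
      have h1 : (fun j => sgnb (σ j) * (0:Fin N → ℝ) j) = (0 : Fin N → ℝ) := by
        funext j; simp
      rw [h1, hx0, Matrix.mulVec_zero]
      have h2 : sqNorm (0 : Fin m → ℝ) = 0 := sqNorm_zero'
      rw [h2]
      norm_num
    rw [hempty]
    simp only [Finset.card_empty, Nat.cast_zero]
    positivity
  · have hxpos : 0 < sqNorm x := lt_of_le_of_ne (sqNorm_nonneg x) (Ne.symm hx0)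
    set c := 1 / Real.sqrt (sqNorm x) with hc
    have hsq : Real.sqrt (sqNorm x) > 0 := Real.sqrt_pos.mpr hxpos
    have hcpos : 0 < c := by positivity
    set u := c • x with hu
    have hu1 : sqNorm u = 1 := by
      rw [hu, sqNorm_smul, hc]
      rw [div_pow, one_pow, Real.sq_sqrt hxpos.le]
      field_simp
    have hsubset : (Finset.univ.filter fun σ : Fin N → Bool =>
        ¬ ((1 - 4*δ) * sqNorm x ≤ sqNorm (Φ.mulVec (fun j => sgnb (σ j) * x j)) ∧
           sqNorm (Φ.mulVec (fun j => sgnb (σ j) * x j)) ≤ (1 + 4*δ) * sqNorm x))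
        ⊆ (Finset.univ.filter fun σ : Fin N → Bool =>
        ¬ |sqNorm (Φ.mulVec (fun j => sgnb (σ j) * u j)) - 1| ≤ 4 * δ) := by
      intro σ hσ
      rw [Finset.mem_filter] at hσ ⊢
      refine ⟨Finset.mem_univ _, ?_⟩
      intro habs
      apply hσ.2
      rw [abs_le] at habs
      -- relate the two norms
      have hrel : (fun j => sgnb (σ j) * x j)
          = (Real.sqrt (sqNorm x)) • (fun j => sgnb (σ j) * u j) := by
        funext j
        rw [hu]
        simp only [Pi.smul_apply, smul_eq_mul, hc]
        field_simp
      have hnorm : sqNorm (Φ.mulVec (fun j => sgnb (σ j) * x j))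
          = sqNorm x * sqNorm (Φ.mulVec (fun j => sgnb (σ j) * u j)) := by
        rw [hrel, Matrix.mulVec_smul]
        have := sqNorm_smul (Real.sqrt (sqNorm x)) (Φ.mulVec (fun j => sgnb (σ j) * u j))
        rw [this, Real.sq_sqrt hxpos.le]
      rw [hnorm]
      constructor
      · calc (1 - 4*δ) * sqNorm x = sqNorm x * (1 - 4*δ) := by ring
          _ ≤ sqNorm x * sqNorm (Φ.mulVec (fun j => sgnb (σ j) * u j)) := by
              apply mul_le_mul_of_nonneg_left _ hxpos.le
              linarith [habs.1]
      · calc sqNorm x * sqNorm (Φ.mulVec (fun j => sgnb (σ j) * u j))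
            ≤ sqNorm x * (1 + 4*δ) := by
              apply mul_le_mul_of_nonneg_left _ hxpos.le
              linarith [habs.2]
          _ = (1 + 4*δ) * sqNorm x := by ring
    calc ((Finset.univ.filter fun σ : Fin N → Bool =>
        ¬ ((1 - 4*δ) * sqNorm x ≤ sqNorm (Φ.mulVec (fun j => sgnb (σ j) * x j)) ∧
           sqNorm (Φ.mulVec (fun j => sgnb (σ j) * x j)) ≤ (1 + 4*δ) * sqNorm x)).card : ℝ)
        ≤ ((Finset.univ.filter fun σ : Fin N → Bool =>
        ¬ |sqNorm (Φ.mulVec (fun j => sgnb (σ j) * u j)) - 1| ≤ 4 * δ).card : ℝ) := by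
          exact_mod_cast Finset.card_le_card hsubset
      _ ≤ 3 * 2^N * Real.exp (-(h:ℝ)/6) := count_bad_unit hRIP hd hh hhk hu1

theorem count_bad_E {k h : ℕ} {Φ : Matrix (Fin m) (Fin N) ℝ} {δ : ℝ}
    (hRIP : HasRIP Φ k δ) (hd : 0 < δ) (hh : 1 ≤ h) (hhk : 2 * h ≤ k)
    (E : Finset (Fin N → ℝ)) :
    ((Finset.univ.filter fun σ : Fin N → Bool =>
        ¬ ∀ x ∈ E, ((1 - 4*δ) * sqNorm x ≤ sqNorm (Φ.mulVec (fun j => sgnb (σ j) * x j)) ∧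
           sqNorm (Φ.mulVec (fun j => sgnb (σ j) * x j)) ≤ (1 + 4*δ) * sqNorm x)).card : ℝ)
      ≤ E.card * (3 * 2^N * Real.exp (-(h:ℝ)/6)) := by
  classical
  have hsub : (Finset.univ.filter fun σ : Fin N → Bool =>
      ¬ ∀ x ∈ E, ((1 - 4*δ) * sqNorm x ≤ sqNorm (Φ.mulVec (fun j => sgnb (σ j) * x j)) ∧
         sqNorm (Φ.mulVec (fun j => sgnb (σ j) * x j)) ≤ (1 + 4*δ) * sqNorm x))
      ⊆ E.biUnion (fun x => Finset.univ.filter fun σ : Fin N → Bool =>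
        ¬ ((1 - 4*δ) * sqNorm x ≤ sqNorm (Φ.mulVec (fun j => sgnb (σ j) * x j)) ∧
           sqNorm (Φ.mulVec (fun j => sgnb (σ j) * x j)) ≤ (1 + 4*δ) * sqNorm x)) := by
    intro σ hσ
    rw [Finset.mem_filter] at hσ
    have h1 := hσ.2
    push_neg at h1
    obtain ⟨x, hxE, hxviol⟩ := h1
    rw [Finset.mem_biUnion]
    refine ⟨x, hxE, ?_⟩
    rw [Finset.mem_filter]
    refine ⟨Finset.mem_univ _, ?_⟩
    intro hc
    rcases hc with ⟨hc1, hc2⟩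
    exact absurd hc2 (not_le.mpr (hxviol hc1))
  calc ((Finset.univ.filter fun σ : Fin N → Bool =>
      ¬ ∀ x ∈ E, ((1 - 4*δ) * sqNorm x ≤ sqNorm (Φ.mulVec (fun j => sgnb (σ j) * x j)) ∧
         sqNorm (Φ.mulVec (fun j => sgnb (σ j) * x j)) ≤ (1 + 4*δ) * sqNorm x)).card : ℝ)
      ≤ ((E.biUnion (fun x => Finset.univ.filter fun σ : Fin N → Bool =>
        ¬ ((1 - 4*δ) * sqNorm x ≤ sqNorm (Φ.mulVec (fun j => sgnb (σ j) * x j)) ∧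
           sqNorm (Φ.mulVec (fun j => sgnb (σ j) * x j)) ≤ (1 + 4*δ) * sqNorm x))).card : ℝ) := by
        exact_mod_cast Finset.card_le_card hsub
    _ ≤ ∑ x ∈ E, ((Finset.univ.filter fun σ : Fin N → Bool =>
        ¬ ((1 - 4*δ) * sqNorm x ≤ sqNorm (Φ.mulVec (fun j => sgnb (σ j) * x j)) ∧
           sqNorm (Φ.mulVec (fun j => sgnb (σ j) * x j)) ≤ (1 + 4*δ) * sqNorm x)).card : ℝ) := by
        have := Finset.card_biUnion_le (s := E) (t := fun x =>
          Finset.univ.filter fun σ : Fin N → Bool =>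
          ¬ ((1 - 4*δ) * sqNorm x ≤ sqNorm (Φ.mulVec (fun j => sgnb (σ j) * x j)) ∧
             sqNorm (Φ.mulVec (fun j => sgnb (σ j) * x j)) ≤ (1 + 4*δ) * sqNorm x))
        exact_mod_cast this
    _ ≤ ∑ _x ∈ E, (3 * 2^N * Real.exp (-(h:ℝ)/6)) :=
        Finset.sum_le_sum fun x _ => count_bad_x hRIP hd hh hhk x
    _ = E.card * (3 * 2^N * Real.exp (-(h:ℝ)/6)) := by
        rw [Finset.sum_const, nsmul_eq_mul]

end quant

lemma sgnb_inj : Function.Injective sgnb := by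
  intro a b hab
  cases a <;> cases b <;> simp [sgnb] at hab ⊢ <;> norm_num at hab

lemma diag_mulVec {m N : ℕ} (Φ : Matrix (Fin m) (Fin N) ℝ) (v x : Fin N → ℝ) :
    (Φ * Matrix.diagonal v).mulVec x = Φ.mulVec (fun j => v j * x j) := by
  have hdv : (Matrix.diagonal v).mulVec x = fun j => v j * x j := by
    funext j
    exact Matrix.mulVec_diagonal v x j
  rw [← Matrix.mulVec_mulVec, hdv]

/-- Theorem 3.1 of Krahmer–Ward: randomizing the column signs of a matrix with
the restricted isometry property yields a Johnson-Lindenstrauss embedding on any fixed set. -/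
theorem rip_to_jl {Ω : Type*} [MeasurableSpace Ω] (μ : Measure Ω) [IsProbabilityMeasure μ]
    {m N p k : ℕ} {ε η δ : ℝ}
    (hε : ε ∈ Set.Ioo (0 : ℝ) 1) (hη : η ∈ Set.Ioo (0 : ℝ) 1)
    (E : Finset (Fin N → ℝ)) (hE : E.card = p)
    (Φ : Matrix (Fin m) (Fin N) ℝ)
    (hk : (k : ℝ) ≥ 40 * Real.log (4 * p / η)) (hδ : δ ≤ ε / 4)
    (hRIP : HasRIP Φ k δ)
    (ξ : Ω → Fin N → ℝ) (hξ : IsRademacher μ ξ) :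
    1 - η ≤ (μ {ω | ∀ x ∈ E,
      (1 - ε) * sqNorm x ≤ sqNorm ((Φ * Matrix.diagonal (ξ ω)).mulVec x) ∧
      sqNorm ((Φ * Matrix.diagonal (ξ ω)).mulVec x) ≤ (1 + ε) * sqNorm x}).toReal := by
  classical
  obtain ⟨hε0, hε1⟩ := hε
  obtain ⟨hη0, hη1⟩ := hη
  rcases Nat.eq_zero_or_pos p with hp0 | hp1
  · -- E is empty
    have hE0 : E = ∅ := Finset.card_eq_zero.mp (by rw [hE, hp0])
    subst hE0
    have huniv : {ω : Ω | ∀ x ∈ (∅ : Finset (Fin N → ℝ)),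
        (1 - ε) * sqNorm x ≤ sqNorm ((Φ * Matrix.diagonal (ξ ω)).mulVec x) ∧
        sqNorm ((Φ * Matrix.diagonal (ξ ω)).mulVec x) ≤ (1 + ε) * sqNorm x} = Set.univ := by
      ext ω
      simp
    rw [huniv, measure_univ]
    simp only [ENNReal.toReal_one]
    linarith
  -- main case
  set δ' := ε / 4 with hδ'
  have hd : 0 < δ' := by rw [hδ']; linarith
  have hεδ : 4 * δ' = ε := by rw [hδ']; ring
  have hRIP' : HasRIP Φ k δ' := by
    intro y hy
    obtain ⟨h1, h2⟩ := hRIP y hy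
    have hnn := sqNorm_nonneg y
    constructor
    · have : (1 - δ') * sqNorm y ≤ (1 - δ) * sqNorm y := by
        apply mul_le_mul_of_nonneg_right _ hnn
        linarith
      linarith
    · have : (1 + δ) * sqNorm y ≤ (1 + δ') * sqNorm y := by
        apply mul_le_mul_of_nonneg_right _ hnn
        linarith
      linarith
  -- basic numerics on k
  have hp1R : (1:ℝ) ≤ p := by exact_mod_cast hp1
  have hlog4 : (1:ℝ) ≤ Real.log (4 * p / η) := by
    have h4 : (4:ℝ) ≤ 4 * p / η := by
      rw [le_div_iff₀ hη0]
      nlinarith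
    calc (1:ℝ) = Real.log (Real.exp 1) := by rw [Real.log_exp]
      _ ≤ Real.log (4 * p / η) := by
          apply Real.log_le_log (Real.exp_pos 1)
          calc Real.exp 1 ≤ 2.7182818286 := Real.exp_one_lt_d9.le
            _ ≤ 4 := by norm_num
            _ ≤ 4 * p / η := h4
  have hk40 : (40:ℝ) ≤ k := by
    calc (40:ℝ) = 40 * 1 := by ring
      _ ≤ 40 * Real.log (4 * p / η) := by linarith
      _ ≤ k := hk
  have hk2 : 2 ≤ k := by exact_mod_cast (by linarith : (2:ℝ) ≤ k)
  set h := k / 2 with hh_def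
  have hh : 1 ≤ h := by omega
  have hhk : 2 * h ≤ k := by omega
  have hhalf : (k:ℝ) - 1 ≤ 2 * (h:ℝ) := by
    have h1 : k - 1 ≤ 2 * h := by omega
    have h2 : ((k:ℝ) - 1) = ((k - 1 : ℕ) : ℝ) := by
      rw [Nat.cast_sub (by omega : 1 ≤ k)]
      norm_num
    rw [h2]
    exact_mod_cast h1
  -- probability of bad sign patterns
  set Good := Finset.univ.filter (fun σ : Fin N → Bool =>
    ∀ x ∈ E, ((1 - 4*δ') * sqNorm x ≤ sqNorm (Φ.mulVec (fun j => sgnb (σ j) * x j)) ∧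
       sqNorm (Φ.mulVec (fun j => sgnb (σ j) * x j)) ≤ (1 + 4*δ') * sqNorm x)) with hGood
  have hcards : Good.card + (Finset.univ.filter (fun σ : Fin N → Bool =>
      ¬ ∀ x ∈ E, ((1 - 4*δ') * sqNorm x ≤ sqNorm (Φ.mulVec (fun j => sgnb (σ j) * x j)) ∧
         sqNorm (Φ.mulVec (fun j => sgnb (σ j) * x j)) ≤ (1 + 4*δ') * sqNorm x))).card
      = 2^N := by
    rw [hGood, Finset.card_filter_add_card_filter_not]
    rw [Finset.card_univ]
    rw [Fintype.card_fun, Fintype.card_bool, Fintype.card_fin]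
  have hbad_le : ((Finset.univ.filter (fun σ : Fin N → Bool =>
      ¬ ∀ x ∈ E, ((1 - 4*δ') * sqNorm x ≤ sqNorm (Φ.mulVec (fun j => sgnb (σ j) * x j)) ∧
         sqNorm (Φ.mulVec (fun j => sgnb (σ j) * x j)) ≤ (1 + 4*δ') * sqNorm x))).card : ℝ)
      ≤ η * 2^N := by
    have hcount := count_bad_E hRIP' hd hh hhk E
    rw [hE] at hcount
    refine le_trans hcount ?_
    -- p * (3 * 2^N * exp (-h/6)) ≤ η * 2^N
    have hexp1 : Real.exp (-(h:ℝ)/6) ≤ Real.exp (-(k:ℝ)/40) := by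
      apply Real.exp_le_exp.mpr
      linarith [hhalf, hk40]
    have hexp2 : (p:ℝ) * Real.exp (-(k:ℝ)/40) ≤ η / 4 := by
      have hlogle : Real.log (4 * p / η) ≤ (k:ℝ)/40 := by linarith
      have hpos : (0:ℝ) < 4 * p / η := by positivity
      have h5 : (4:ℝ) * p / η ≤ Real.exp ((k:ℝ)/40) := by
        calc (4:ℝ) * p / η = Real.exp (Real.log (4 * p / η)) := by rw [Real.exp_log hpos]
          _ ≤ Real.exp ((k:ℝ)/40) := Real.exp_le_exp.mpr hlogle
      have h6 : (4:ℝ) * p ≤ η * Real.exp ((k:ℝ)/40) := by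
        rw [div_le_iff₀ hη0] at h5
        linarith
      have hepos : (0:ℝ) < Real.exp ((k:ℝ)/40) := Real.exp_pos _
      have h7 : (p:ℝ) * Real.exp (-(k:ℝ)/40) = p / Real.exp ((k:ℝ)/40) := by
        rw [show (-(k:ℝ)/40) = -((k:ℝ)/40) by ring, Real.exp_neg]
        ring
      rw [h7, div_le_div_iff₀ hepos (by norm_num : (0:ℝ) < 4)]
      linarith
    have h2N : (0:ℝ) < 2^N := by positivity
    calc (p:ℝ) * (3 * 2^N * Real.exp (-(h:ℝ)/6))
        ≤ (p:ℝ) * (3 * 2^N * Real.exp (-(k:ℝ)/40)) := by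
          apply mul_le_mul_of_nonneg_left _ (by positivity : (0:ℝ) ≤ p)
          apply mul_le_mul_of_nonneg_left hexp1 (by positivity)
      _ = 3 * 2^N * ((p:ℝ) * Real.exp (-(k:ℝ)/40)) := by ring
      _ ≤ 3 * 2^N * (η/4) := by
          apply mul_le_mul_of_nonneg_left hexp2 (by positivity)
      _ ≤ η * 2^N := by nlinarith
  -- good count lower bound
  have hgood_ge : (1 - η) * 2^N ≤ (Good.card : ℝ) := by
    have h7 : (Good.card : ℝ) + ((Finset.univ.filter (fun σ : Fin N → Bool =>
        ¬ ∀ x ∈ E, ((1 - 4*δ') * sqNorm x ≤ sqNorm (Φ.mulVec (fun j => sgnb (σ j) * x j)) ∧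
           sqNorm (Φ.mulVec (fun j => sgnb (σ j) * x j)) ≤ (1 + 4*δ') * sqNorm x))).card : ℝ)
        = 2^N := by
      exact_mod_cast congrArg (Nat.cast : ℕ → ℝ) hcards
    linarith
  -- measure part
  set rv : (Fin N → Bool) → (Fin N → ℝ) := fun σ j => sgnb (σ j) with hrv
  set Event := {ω : Ω | ∀ x ∈ E,
      (1 - ε) * sqNorm x ≤ sqNorm ((Φ * Matrix.diagonal (ξ ω)).mulVec x) ∧
      sqNorm ((Φ * Matrix.diagonal (ξ ω)).mulVec x) ≤ (1 + ε) * sqNorm x} with hEvent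
  have hmeas_set : ∀ σ : Fin N → Bool, MeasurableSet {ω | ξ ω = rv σ} := by
    intro σ
    have he : {ω | ξ ω = rv σ} = ξ ⁻¹' {rv σ} := rfl
    rw [he]
    exact hξ.1 (measurableSet_singleton _)
  have hsub : ∀ σ ∈ Good, {ω | ξ ω = rv σ} ⊆ Event := by
    intro σ hσ ω hω
    rw [Set.mem_setOf_eq] at hω
    rw [hEvent, Set.mem_setOf_eq]
    intro x hx
    rw [hGood, Finset.mem_filter] at hσ
    obtain ⟨hc1, hc2⟩ := hσ.2 x hx
    rw [hω, diag_mulVec]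
    have he2 : (fun j => rv σ j * x j) = (fun j => sgnb (σ j) * x j) := rfl
    rw [he2, ← hεδ]
    exact ⟨hc1, hc2⟩
  have hdisj : (↑Good : Set (Fin N → Bool)).PairwiseDisjoint
      (fun σ => {ω | ξ ω = rv σ}) := by
    intro a _ b _ hab
    apply Set.disjoint_left.mpr
    intro ω h1 h2
    rw [Set.mem_setOf_eq] at h1 h2
    apply hab
    funext j
    apply sgnb_inj
    calc sgnb (a j) = rv a j := rfl
      _ = ξ ω j := by rw [h1]
      _ = rv b j := by rw [h2]
      _ = sgnb (b j) := rfl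
  have hunion : μ (⋃ σ ∈ Good, {ω | ξ ω = rv σ})
      = ∑ σ ∈ Good, μ {ω | ξ ω = rv σ} :=
    measure_biUnion_finset hdisj (fun σ _ => hmeas_set σ)
  have hpattern : ∀ σ : Fin N → Bool, μ {ω | ξ ω = rv σ} = ENNReal.ofReal (1/2) ^ N := by
    intro σ
    have hEq : {ω | ξ ω = rv σ}
        = ⋂ i ∈ (Finset.univ : Finset (Fin N)), (fun ω => ξ ω i) ⁻¹' {rv σ i} := by
      ext ω
      simp only [Set.mem_setOf_eq, Set.mem_iInter, Set.mem_preimage, Set.mem_singleton_iff]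
      constructor
      · intro hfun i _
        rw [hfun]
      · intro hall
        funext i
        exact hall i (Finset.mem_univ i)
    rw [hEq]
    have hind := hξ.2.1
    rw [iIndepFun_iff_measure_inter_preimage_eq_mul] at hind
    rw [hind Finset.univ (fun i _ => measurableSet_singleton _)]
    have hfac : ∀ i : Fin N, μ ((fun ω => ξ ω i) ⁻¹' {rv σ i}) = ENNReal.ofReal (1/2) := by
      intro i
      have hne : μ ((fun ω => ξ ω i) ⁻¹' {rv σ i}) ≠ ⊤ := measure_ne_top μ _
      have htr : (μ ((fun ω => ξ ω i) ⁻¹' {rv σ i})).toReal = 1/2 := by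
        cases hσi : σ i with
        | true =>
          have he3 : ((fun ω => ξ ω i) ⁻¹' {rv σ i}) = {ω | ξ ω i = 1} := by
            ext ω
            simp only [Set.mem_preimage, Set.mem_singleton_iff, Set.mem_setOf_eq, hrv]
            rw [hσi]
            simp [sgnb]
          rw [he3]
          exact (hξ.2.2 i).1
        | false =>
          have he3 : ((fun ω => ξ ω i) ⁻¹' {rv σ i}) = {ω | ξ ω i = -1} := by
            ext ω
            simp only [Set.mem_preimage, Set.mem_singleton_iff, Set.mem_setOf_eq, hrv]
            rw [hσi]
            simp [sgnb]
          rw [he3]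
          exact (hξ.2.2 i).2
      rw [← ENNReal.ofReal_toReal hne, htr]
    rw [Finset.prod_congr rfl (fun i _ => hfac i), Finset.prod_const, Finset.card_univ,
      Fintype.card_fin]
  have hge : (Good.card : ENNReal) * ENNReal.ofReal (1/2) ^ N ≤ μ Event := by
    calc (Good.card : ENNReal) * ENNReal.ofReal (1/2)^N
        = ∑ _σ ∈ Good, ENNReal.ofReal (1/2)^N := by
          rw [Finset.sum_const, nsmul_eq_mul]
      _ = ∑ σ ∈ Good, μ {ω | ξ ω = rv σ} :=
          Finset.sum_congr rfl fun σ _ => (hpattern σ).symm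
      _ = μ (⋃ σ ∈ Good, {ω | ξ ω = rv σ}) := hunion.symm
      _ ≤ μ Event := measure_mono (Set.iUnion₂_subset hsub)
  have htoReal : ((Good.card : ℝ) * (1/2)^N) ≤ (μ Event).toReal := by
    have h9 := ENNReal.toReal_mono (measure_ne_top μ _) hge
    rw [ENNReal.toReal_mul, ENNReal.toReal_pow, ENNReal.toReal_ofReal (by norm_num),
      ENNReal.toReal_natCast] at h9
    exact h9
  have hpow1 : (2:ℝ)^N * (1/2)^N = 1 := by
    rw [← mul_pow]
    norm_num
  calc 1 - η = (1 - η) * 2^N * (1/2)^N := by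
        rw [mul_assoc, hpow1, mul_one]
    _ ≤ (Good.card : ℝ) * (1/2)^N := by
        apply mul_le_mul_of_nonneg_right hgood_ge (by positivity)
    _ ≤ (μ Event).toReal := htoReal

end KWProof
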